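/- Let A be a self-adjoint generalized ring and s ∈ A_{[1]}. The canonical homomorphism Ψ : A_s → O_A(D_s), sending a/s' to the constant section 𝔭 ↦ a/s' ∈ (A_𝔭)_X, is an isomorphism of generalized rings. In particular, for s = 1, the canonical homomorphism A → O_A(spec(A)) is an isomorphism. -/

import Mathlib

open scoped Classical

noncomputable section

/-! ### Partially defined maps of finite sets -/

/-- Composition of partially defined maps of sets (`Set_•`). -/
def pcomp {X Y Z : Type} (g : Y → Option Z) (f : X → Option Y) : X → Option Z :=
  fun x => (f x).bind g

/-- The fiber of a partially defined map over a point of the target. -/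
abbrev pfib {X Y : Type} (f : X → Option Y) (y : Y) : Type := {x : X // f x = some y}

/-- The fiber of the identity partial map over `x` is a singleton. -/
def idFiberEquiv {X : Type} (x : X) : Fin 1 ≃ pfib (fun x' : X => some x') x where
  toFun _ := ⟨x, rfl⟩
  invFun _ := 0
  left_inv _ := Subsingleton.elim _ _
  right_inv p := Subtype.ext (Option.some.inj p.2).symm

/-- The fiber of the constant (total) map to the point `[1]` is everything. -/
def constFiberEquiv (X : Type) (z : Fin 1) :
    X ≃ pfib (fun _ : X => some (0 : Fin 1)) z where
  toFun x := ⟨x, congrArg some (Subsingleton.elim (0 : Fin 1) z)⟩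
  invFun p := p.1
  left_inv _ := rfl
  right_inv p := rfl

/-- The fiber of (the graph of) a bijection is a singleton. -/
def equivFiberEquiv {X Y : Type} (e : X ≃ Y) (y : Y) :
    Fin 1 ≃ pfib (fun x : X => some (e x)) y where
  toFun _ := ⟨e.symm y, congrArg some (e.apply_symm_apply y)⟩
  invFun _ := 0
  left_inv _ := Subsingleton.elim _ _
  right_inv p := Subtype.ext ((Equiv.symm_apply_eq e).mpr (Option.some.inj p.2).symm)

/-- The fiber of the map `[1] → X` with image `{x}` over `x' = x` is a singleton. -/
def pointFiberEquiv {X : Type} {x x' : X} (h : x = x') :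
    Fin 1 ≃ pfib (fun _ : Fin 1 => some x) x' where
  toFun z := ⟨z, congrArg some h⟩
  invFun p := p.1
  left_inv _ := rfl
  right_inv p := rfl

/-- Restriction of `f` to the fiber of `pcomp g f` over `z`, as a partial map into
the fiber of `g` over `z`. -/
def resMap {X Y Z : Type} (g : Y → Option Z) (f : X → Option Y) (z : Z) :
    pfib (pcomp g f) z → Option (pfib g z) :=
  fun x => (f x.1).bind fun y => if h : g y = some z then some ⟨y, h⟩ else none

/-- Identification of the fibers of the restriction `resMap g f z` with fibers of `f`. -/
def resFiberEquiv {X Y Z : Type} (g : Y → Option Z) (f : X → Option Y) (z : Z)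
    (p : pfib g z) : pfib f p.1 ≃ pfib (resMap g f z) p where
  toFun x := ⟨⟨x.1, by show (f x.1).bind g = some z; rw [x.2, Option.bind_some, p.2]⟩, by
    show (f x.1).bind _ = some p
    rw [x.2, Option.bind_some, dif_pos p.2]⟩
  invFun q := ⟨q.1.1, by
    have h := q.2
    unfold resMap at h
    rcases hf : f q.1.1 with _ | y
    · rw [hf, Option.bind_none] at h
      exact nomatch h
    · rw [hf, Option.bind_some] at h
      by_cases hg : g y = some z
      · rw [dif_pos hg] at h
        have hy : y = p.1 := congrArg Subtype.val (Option.some.inj h)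
        exact congrArg some hy
      · rw [dif_neg hg] at h
        exact nomatch h⟩
  left_inv x := Subtype.ext rfl
  right_inv q := Subtype.ext (Subtype.ext rfl)

/-! ### Fibered products -/

/-- The fibered product of two partial maps `g : Z ⇀ Y` and `f : X ⇀ Y`. -/
abbrev FP {X Y Z : Type} (g : Z → Option Y) (f : X → Option Y) : Type :=
  {p : Z × X // ∃ y : Y, g p.1 = some y ∧ f p.2 = some y}

/-- First projection of the fibered product, as a partial map. -/
def fpFst {X Y Z : Type} (g : Z → Option Y) (f : X → Option Y) : FP g f → Option Z :=
  fun p => some p.1.1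

/-- Second projection of the fibered product, as a partial map. -/
def fpSnd {X Y Z : Type} (g : Z → Option Y) (f : X → Option Y) : FP g f → Option X :=
  fun p => some p.1.2

/-- Identification of the fiber of the second projection of `Z ×_Y X` over `x`
with the fiber of `g` over `f x`. -/
def fpFiberSnd {X Y Z : Type} (g : Z → Option Y) (f : X → Option Y) {x : X} {y : Y}
    (hy : f x = some y) : pfib g y ≃ pfib (fpSnd g f) x where
  toFun w := ⟨⟨(w.1, x), ⟨y, w.2, hy⟩⟩, rfl⟩
  invFun q := ⟨q.1.1.1, by
    obtain ⟨y', hg, hf⟩ := q.1.2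
    have hx : q.1.1.2 = x := Option.some.inj q.2
    rw [hx] at hf
    have hyy : y' = y := Option.some.inj (hf.symm.trans hy)
    rw [hyy] at hg
    exact hg⟩
  left_inv w := Subtype.ext rfl
  right_inv q := by
    apply Subtype.ext
    apply Subtype.ext
    have hx : q.1.1.2 = x := Option.some.inj q.2
    exact Prod.ext rfl hx.symm

/-- Identification of the fiber of the first projection of `Z ×_Y X` over `z`
with the fiber of `f` over `g z`. -/
def fpFiberFst {X Y Z : Type} (g : Z → Option Y) (f : X → Option Y) {z : Z} {y : Y}
    (hy : g z = some y) : pfib f y ≃ pfib (fpFst g f) z where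
  toFun w := ⟨⟨(z, w.1), ⟨y, hy, w.2⟩⟩, rfl⟩
  invFun q := ⟨q.1.1.2, by
    obtain ⟨y', hg, hf⟩ := q.1.2
    have hz : q.1.1.1 = z := Option.some.inj q.2
    rw [hz] at hg
    have hyy : y' = y := Option.some.inj (hg.symm.trans hy)
    rw [hyy] at hf
    exact hf⟩
  left_inv w := Subtype.ext rfl
  right_inv q := by
    apply Subtype.ext
    apply Subtype.ext
    have hz : q.1.1.1 = z := Option.some.inj q.2
    exact Prod.ext hz.symm rfl
/-! ### Generalized rings

A generalized ring assigns to each finite set `X` a pointed set `A X`, functorially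
with respect to bijections (and hence, via the operations and units, with respect to
all partial bijections of finite sets), together with operations of multiplication
`∘ : A Y × A f → A X` and contraction `( , ) : A X × A f → A Y` for every partially
defined map `f : X ⇀ Y`, where `A f = ∏_{y ∈ Y} A (f⁻¹ y)`, and a unit `1 ∈ A [1]`,
subject to the axioms of associativity, left- and right-adjunction, left- and
right-linearity, and the unit axioms. -/

/-- The data underlying a generalized ring. -/
structure GenRingData where
  /-- the pointed set attached to a finite set `X` -/
  A : (X : Type) → [inst : Finite X] → Type
  /-- the base point `0_X ∈ A_X` -/
  zero : (X : Type) → [inst : Finite X] → A X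
  /-- the unit `1 ∈ A_{[1]}` -/
  one : A (Fin 1)
  /-- functoriality with respect to bijections of finite sets -/
  map : {X Y : Type} → [inst : Finite X] → [inst' : Finite Y] → (X ≃ Y) → A X → A Y
  /-- multiplication `∘ : A_Y × A_f → A_X` for a partially defined map `f : X ⇀ Y` -/
  mul : {X Y : Type} → [inst : Finite X] → [inst' : Finite Y] → (f : X → Option Y) →
      A Y → ((y : Y) → A (pfib f y)) → A X
  /-- contraction `( , ) : A_X × A_f → A_Y` for a partially defined map `f : X ⇀ Y` -/
  contr : {X Y : Type} → [inst : Finite X] → [inst' : Finite Y] → (f : X → Option Y) →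
      A X → ((y : Y) → A (pfib f y)) → A Y

namespace GenRingData

variable (R : GenRingData)

/-- The unit family `1_{id_X} ∈ A_{id_X}`. -/
def oneId (X : Type) [Finite X] : (x : X) → R.A (pfib (fun x' : X => some x') x) :=
  fun x => R.map (idFiberEquiv x) R.one

/-- The monoid operation `a ∘ b` on `A_{[1]}`. -/
def op (a b : R.A (Fin 1)) : R.A (Fin 1) :=
  R.mul (fun z : Fin 1 => some z) a (fun z => R.map (idFiberEquiv z) b)

/-- The `n`-fold power `a ∘ ⋯ ∘ a` in the monoid `A_{[1]}` (with `a⁰ = 1`). -/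
def opPow (a : R.A (Fin 1)) : ℕ → R.A (Fin 1)
  | 0 => R.one
  | n + 1 => R.op a (opPow a n)

/-- The left action `s ∘ a` of `A_{[1]}` on `A_X` (operation (1.2.5)). -/
def lact {X : Type} [Finite X] (s : R.A (Fin 1)) (a : R.A X) : R.A X :=
  R.mul (fun _ : X => some (0 : Fin 1)) s (fun z => R.map (constFiberEquiv X z) a)

/-- The pairing `(a, d) : A_X × A_X → A_{[1]}` (operation (1.2.6)). -/
def pair {X : Type} [Finite X] (a d : R.A X) : R.A (Fin 1) :=
  R.contr (fun _ : X => some (0 : Fin 1)) a (fun z => R.map (constFiberEquiv X z) d)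

/-- The right (diagonal) action `b ∘ c` of `(A_{[1]})^X` on `A_X` (operation (1.2.7)). -/
def ract {X : Type} [Finite X] (b : R.A X) (c : X → R.A (Fin 1)) : R.A X :=
  R.mul (fun x : X => some x) b (fun x => R.map (idFiberEquiv x) (c x))

/-- The involution `a ↦ aᵗ = (1, a)` of `A_{[1]}`. -/
def adj (a : R.A (Fin 1)) : R.A (Fin 1) := R.pair R.one a

/-- The element `(a, 1_{j_x}) ∈ A_X` obtained from `a ∈ A_{[1]}` via the
inclusion `j_x : {x} ↪ X`; for `a = 1` this is the image `1_x` of the unit. -/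
def pointElt (X : Type) [Finite X] (x : X) (a : R.A (Fin 1)) : R.A X :=
  R.contr (fun _ : Fin 1 => some x) a
    (fun x' => if h : x = x' then R.map (pointFiberEquiv h) R.one else R.zero _)

/-- The extended multiplication `A_g × A_f → A_{g∘f}`, defined fiberwise. -/
def emul {X Y Z : Type} [Finite X] [Finite Y] [Finite Z]
    (g : Y → Option Z) (f : X → Option Y)
    (c : (z : Z) → R.A (pfib g z)) (b : (y : Y) → R.A (pfib f y)) :
    (z : Z) → R.A (pfib (pcomp g f) z) :=
  fun z => R.mul (resMap g f z) (c z) (fun p => R.map (resFiberEquiv g f z p) (b p.1))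

/-- The extended contraction `A_{g∘f} × A_f → A_g`, defined fiberwise. -/
def econtr {X Y Z : Type} [Finite X] [Finite Y] [Finite Z]
    (g : Y → Option Z) (f : X → Option Y)
    (a : (z : Z) → R.A (pfib (pcomp g f) z)) (b : (y : Y) → R.A (pfib f y)) :
    (z : Z) → R.A (pfib g z) :=
  fun z => R.contr (resMap g f z) (a z) (fun p => R.map (resFiberEquiv g f z p) (b p.1))

/-- The pullback `ã ∈ A_{g̃}` of `a ∈ A_g` along the fibered product (used in
the right-linearity axiom). -/
def atilde {X Y Z : Type} [Finite X] [Finite Y] [Finite Z]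
    (g : Z → Option Y) (f : X → Option Y) (a : (y : Y) → R.A (pfib g y)) :
    (x : X) → R.A (pfib (fpSnd g f) x) :=
  fun x =>
    match hfx : f x with
    | some y => R.map (fpFiberSnd g f hfx) (a y)
    | none => R.zero _

/-- The pullback `c̃ ∈ A_{f̃}` of `c ∈ A_f` along the fibered product (used in
the right-linearity axiom). -/
def ctilde {X Y Z : Type} [Finite X] [Finite Y] [Finite Z]
    (g : Z → Option Y) (f : X → Option Y) (c : (y : Y) → R.A (pfib f y)) :
    (z : Z) → R.A (pfib (fpFst g f) z) :=
  fun z =>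
    match hgz : g z with
    | some y => R.map (fpFiberFst g f hgz) (c y)
    | none => R.zero _

end GenRingData

/-- A generalized ring: the data of `GenRingData` subject to the axioms
(pointedness, functoriality, zero laws, associativity, left/right adjunction,
left/right linearity, and the unit axioms, the latter in their reduced form over
the one-point base, which is equivalent to the general form). -/
structure GenRing where
  /-- the underlying data -/
  data : GenRingData
  /-- `A_∅ = {0}` -/
  isEmpty_eq_zero : ∀ (X : Type) [Finite X] [IsEmpty X] (a : data.A X), a = data.zero X
  /-- functoriality: identity -/
  map_refl : ∀ (X : Type) [Finite X] (a : data.A X), data.map (Equiv.refl X) a = a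
  /-- functoriality: composition -/
  map_trans : ∀ {X Y Z : Type} [Finite X] [Finite Y] [Finite Z] (e : X ≃ Y) (e' : Y ≃ Z)
      (a : data.A X), data.map (e.trans e') a = data.map e' (data.map e a)
  /-- functoriality: the maps are pointed -/
  map_zero : ∀ {X Y : Type} [Finite X] [Finite Y] (e : X ≃ Y),
      data.map e (data.zero X) = data.zero Y
  /-- `0 ∘ b = 0` -/
  mul_zero_left : ∀ {X Y : Type} [Finite X] [Finite Y] (f : X → Option Y)
      (b : (y : Y) → data.A (pfib f y)), data.mul f (data.zero Y) b = data.zero X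
  /-- `a ∘ 0_f = 0` -/
  mul_zero_right : ∀ {X Y : Type} [Finite X] [Finite Y] (f : X → Option Y) (a : data.A Y),
      data.mul f a (fun y => data.zero (pfib f y)) = data.zero X
  /-- `(0, b) = 0` -/
  contr_zero_left : ∀ {X Y : Type} [Finite X] [Finite Y] (f : X → Option Y)
      (b : (y : Y) → data.A (pfib f y)), data.contr f (data.zero X) b = data.zero Y
  /-- `(a, 0_f) = 0` -/
  contr_zero_right : ∀ {X Y : Type} [Finite X] [Finite Y] (f : X → Option Y) (a : data.A X),
      data.contr f a (fun y => data.zero (pfib f y)) = data.zero Y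
  /-- associativity: `d ∘ (c ∘ b) = (d ∘ c) ∘ b` -/
  assoc : ∀ {X Y Z : Type} [Finite X] [Finite Y] [Finite Z]
      (g : Y → Option Z) (f : X → Option Y) (d : data.A Z)
      (c : (z : Z) → data.A (pfib g z)) (b : (y : Y) → data.A (pfib f y)),
      data.mul (pcomp g f) d (data.emul g f c b) = data.mul f (data.mul g d c) b
  /-- left-adjunction: `(d, a ∘ c) = ((d, c), a)` -/
  left_adj : ∀ {X Y Z : Type} [Finite X] [Finite Y] [Finite Z]
      (g : Y → Option Z) (f : X → Option Y) (d : data.A X)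
      (a : (z : Z) → data.A (pfib g z)) (c : (y : Y) → data.A (pfib f y)),
      data.contr (pcomp g f) d (data.emul g f a c) = data.contr g (data.contr f d c) a
  /-- right-adjunction: `(d ∘ c, a) = (d, (a, c))` -/
  right_adj : ∀ {X Y Z : Type} [Finite X] [Finite Y] [Finite Z]
      (g : Y → Option Z) (f : X → Option Y) (d : data.A Y)
      (a : (z : Z) → data.A (pfib (pcomp g f) z)) (c : (y : Y) → data.A (pfib f y)),
      data.contr (pcomp g f) (data.mul f d c) a = data.contr g d (data.econtr g f a c)
  /-- left-linearity: `(d ∘ a, c) = d ∘ (a, c)` -/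
  left_lin : ∀ {X Y Z : Type} [Finite X] [Finite Y] [Finite Z]
      (g : Y → Option Z) (f : X → Option Y) (d : data.A Z)
      (a : (z : Z) → data.A (pfib (pcomp g f) z)) (c : (y : Y) → data.A (pfib f y)),
      data.contr f (data.mul (pcomp g f) d a) c = data.mul g d (data.econtr g f a c)
  /-- right-linearity: `(d, c) ∘ a = (d ∘ ã, c̃)`, with `ã`, `c̃` the pullbacks
  along the fibered product `Z ×_Y X` -/
  right_lin : ∀ {X Y Z : Type} [Finite X] [Finite Y] [Finite Z]
      (g : Z → Option Y) (f : X → Option Y) (d : data.A X)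
      (a : (y : Y) → data.A (pfib g y)) (c : (y : Y) → data.A (pfib f y)),
      data.mul g (data.contr f d c) a
        = data.contr (fpFst g f) (data.mul (fpSnd g f) d (data.atilde g f a))
            (data.ctilde g f c)
  /-- unit axiom: `a ∘ 1_{id_X} = a` -/
  mul_one_id : ∀ (X : Type) [Finite X] (a : data.A X),
      data.mul (fun x : X => some x) a (data.oneId X) = a
  /-- unit axiom: `1 ∘ a = a` -/
  one_lact : ∀ (X : Type) [Finite X] (a : data.A X), data.lact data.one a = a
  /-- unit axiom: `(a, 1_{id_X}) = a` -/
  contr_one_id : ∀ (X : Type) [Finite X] (a : data.A X),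
      data.contr (fun x : X => some x) a (data.oneId X) = a
  /-- unit axiom (1.8.11): `(a, 1_f) = f_A(a)` for a bijection `f = e` -/
  map_eq_contr : ∀ {X Y : Type} [Finite X] [Finite Y] (e : X ≃ Y) (a : data.A X),
      data.contr (fun x : X => some (e x)) a
        (fun y => data.map (equivFiberEquiv e y) data.one) = data.map e a
  /-- unit axiom (1.8.11): `a ∘ 1_{fᵗ} = f_A(a)` for a bijection `f = e` -/
  map_eq_mul : ∀ {X Y : Type} [Finite X] [Finite Y] (e : X ≃ Y) (a : data.A X),
      data.mul (fun y : Y => some (e.symm y)) a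
        (fun x => data.map (equivFiberEquiv e.symm x) data.one) = data.map e a
namespace GenRing

variable (R : GenRing)

/-- An `h`-ideal of a generalized ring: a subset `I ⊆ A_{[1]}` such that
`(b ∘ c, d) ∈ I` for all finite `X`, all `b, d ∈ A_X` and all `c ∈ I^X ⊆ (A_{[1]})^X`. -/
def IsHIdeal (I : Set (R.data.A (Fin 1))) : Prop :=
  ∀ (X : Type) [Finite X], ∀ (b d : R.data.A X) (c : X → R.data.A (Fin 1)),
    (∀ x, c x ∈ I) → R.data.pair (R.data.ract b c) d ∈ I

/-- A prime of a generalized ring: a proper `h`-ideal `P` whose complement is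
closed under the multiplication of `A_{[1]}`. -/
def IsPrimeH (P : Set (R.data.A (Fin 1))) : Prop :=
  R.IsHIdeal P ∧ R.data.one ∉ P ∧
    ∀ a b : R.data.A (Fin 1), R.data.op a b ∈ P → a ∈ P ∨ b ∈ P

end GenRing

/-- The spectrum of a generalized ring: the set of its primes. -/
structure SpecG (R : GenRing) where
  /-- the underlying prime `h`-ideal -/
  I : Set (R.data.A (Fin 1))
  /-- it is prime -/
  prime : R.IsPrimeH I

namespace GenRing

variable (R : GenRing)

/-- The basic open set `D_a = {𝔭 : a ∉ 𝔭}` of the Zariski topology. -/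
def basicOpen (a : R.data.A (Fin 1)) : Set (SpecG R) := {p | a ∉ p.I}

/-- The closed set `V(s) = {𝔭 : 𝔭 ⊇ s}` of the Zariski topology. -/
def zeroLocus (s : Set (R.data.A (Fin 1))) : Set (SpecG R) := {p | s ⊆ p.I}

/-- The Zariski topology on the spectrum, generated by the basic open sets. -/
instance : TopologicalSpace (SpecG R) :=
  TopologicalSpace.generateFrom {U | ∃ a : R.data.A (Fin 1), U = R.basicOpen a}

end GenRing

/-- A homomorphism of generalized rings: a (pointed, natural) family of maps
preserving multiplication, contraction and the unit. -/
structure GenRingHom (R S : GenRing) where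
  /-- the underlying family of maps -/
  app : (X : Type) → [inst : Finite X] → R.data.A X → S.data.A X
  /-- zero is preserved -/
  app_zero : ∀ (X : Type) [Finite X], app X (R.data.zero X) = S.data.zero X
  /-- the unit is preserved -/
  app_one : app (Fin 1) R.data.one = S.data.one
  /-- naturality with respect to bijections -/
  app_map : ∀ {X Y : Type} [Finite X] [Finite Y] (e : X ≃ Y) (a : R.data.A X),
      app Y (R.data.map e a) = S.data.map e (app X a)
  /-- multiplication is preserved -/
  app_mul : ∀ {X Y : Type} [Finite X] [Finite Y] (f : X → Option Y)
      (a : R.data.A Y) (b : (y : Y) → R.data.A (pfib f y)),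
      app X (R.data.mul f a b) = S.data.mul f (app Y a) (fun y => app (pfib f y) (b y))
  /-- contraction is preserved -/
  app_contr : ∀ {X Y : Type} [Finite X] [Finite Y] (f : X → Option Y)
      (a : R.data.A X) (b : (y : Y) → R.data.A (pfib f y)),
      app Y (R.data.contr f a b) = S.data.contr f (app X a) (fun y => app (pfib f y) (b y))

namespace GenRingHom

variable {R S : GenRing} (φ : GenRingHom R S)

theorem app_op (a b : R.data.A (Fin 1)) :
    φ.app (Fin 1) (R.data.op a b) = S.data.op (φ.app (Fin 1) a) (φ.app (Fin 1) b) := by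
  unfold GenRingData.op
  rw [φ.app_mul]
  congr 1
  funext z
  rw [φ.app_map]

theorem app_ract {X : Type} [Finite X] (b : R.data.A X) (c : X → R.data.A (Fin 1)) :
    φ.app X (R.data.ract b c) = S.data.ract (φ.app X b) (fun x => φ.app (Fin 1) (c x)) := by
  unfold GenRingData.ract
  rw [φ.app_mul]
  congr 1
  funext x
  rw [φ.app_map]

theorem app_pair {X : Type} [Finite X] (a d : R.data.A X) :
    φ.app (Fin 1) (R.data.pair a d) = S.data.pair (φ.app X a) (φ.app X d) := by
  unfold GenRingData.pair
  rw [φ.app_contr]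
  congr 1
  funext z
  rw [φ.app_map]

theorem app_lact {X : Type} [Finite X] (s : R.data.A (Fin 1)) (a : R.data.A X) :
    φ.app X (R.data.lact s a) = S.data.lact (φ.app (Fin 1) s) (φ.app X a) := by
  unfold GenRingData.lact
  rw [φ.app_mul]
  congr 1
  funext z
  rw [φ.app_map]

/-- The map `spec(φ) : spec(S) → spec(R)`, `𝔮 ↦ φ_{[1]}⁻¹(𝔮)`, induced by a
homomorphism of generalized rings `φ : R → S`. -/
def specMap (q : SpecG S) : SpecG R where
  I := φ.app (Fin 1) ⁻¹' q.I
  prime := by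
    refine ⟨?_, ?_, ?_⟩
    · intro X _ b d c hc
      show φ.app (Fin 1) (R.data.pair (R.data.ract b c) d) ∈ q.I
      rw [φ.app_pair, φ.app_ract]
      exact q.prime.1 X (φ.app X b) (φ.app X d) (fun x => φ.app (Fin 1) (c x)) hc
    · show φ.app (Fin 1) R.data.one ∉ q.I
      rw [φ.app_one]
      exact q.prime.2.1
    · intro a b hab
      have h : S.data.op (φ.app (Fin 1) a) (φ.app (Fin 1) b) ∈ q.I := by
        rw [← φ.app_op]; exact hab
      exact q.prime.2.2 _ _ h

end GenRingHom

/-- An equivalence ideal of a generalized ring: a family of equivalence relations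
on the sets `A_X` respecting the operations of multiplication and contraction. -/
structure EqvIdeal (R : GenRing) where
  /-- the family of relations -/
  rel : (X : Type) → [inst : Finite X] → R.data.A X → R.data.A X → Prop
  refl : ∀ (X : Type) [Finite X] (a : R.data.A X), rel X a a
  symm : ∀ (X : Type) [Finite X] {a b : R.data.A X}, rel X a b → rel X b a
  trans : ∀ (X : Type) [Finite X] {a b c : R.data.A X}, rel X a b → rel X b c → rel X a c
  /-- `a ∼ a'` implies `a ∘ b ∼ a' ∘ b` -/
  mul_left : ∀ {X Y : Type} [Finite X] [Finite Y] (f : X → Option Y) {a a' : R.data.A Y}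
      (b : (y : Y) → R.data.A (pfib f y)),
      rel Y a a' → rel X (R.data.mul f a b) (R.data.mul f a' b)
  /-- `b ∼ b'` (componentwise) implies `a ∘ b ∼ a ∘ b'` -/
  mul_right : ∀ {X Y : Type} [Finite X] [Finite Y] (f : X → Option Y) (a : R.data.A Y)
      {b b' : (y : Y) → R.data.A (pfib f y)},
      (∀ y, rel (pfib f y) (b y) (b' y)) → rel X (R.data.mul f a b) (R.data.mul f a b')
  /-- `a ∼ a'` implies `(a, b) ∼ (a', b)` -/
  contr_left : ∀ {X Y : Type} [Finite X] [Finite Y] (f : X → Option Y) {a a' : R.data.A X}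
      (b : (y : Y) → R.data.A (pfib f y)),
      rel X a a' → rel Y (R.data.contr f a b) (R.data.contr f a' b)
  /-- `b ∼ b'` (componentwise) implies `(a, b) ∼ (a, b')` -/
  contr_right : ∀ {X Y : Type} [Finite X] [Finite Y] (f : X → Option Y) (a : R.data.A X)
      {b b' : (y : Y) → R.data.A (pfib f y)},
      (∀ y, rel (pfib f y) (b y) (b' y)) → rel Y (R.data.contr f a b) (R.data.contr f a b')

namespace GenRing

variable (R : GenRing)

/-- The equivalence ideal `E(I)` generated by an (`h`-)ideal `I`: `a ∼ b` iff the
pair `(a, b)` belongs to every equivalence ideal containing `(i, 0)` for all `i ∈ I`. -/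
def erel (I : Set (R.data.A (Fin 1))) (X : Type) [Finite X] (a b : R.data.A X) : Prop :=
  ∀ ε : EqvIdeal R, (∀ i ∈ I, ε.rel (Fin 1) i (R.data.zero (Fin 1))) → ε.rel X a b

/-- A stable `h`-ideal: an `h`-ideal `I` such that for every pair `(a, b)` in the
equivalence ideal `E(I)` generated by `I` one has `a ∈ I ↔ b ∈ I`. -/
def IsStableHIdeal (I : Set (R.data.A (Fin 1))) : Prop :=
  R.IsHIdeal I ∧ ∀ a b : R.data.A (Fin 1), R.erel I (Fin 1) a b → (a ∈ I ↔ b ∈ I)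

/-- A multiplicative subset of `A_{[1]}`: contains `1`, closed under `∘`,
and stable under the involution. -/
def IsMulSet (S : Set (R.data.A (Fin 1))) : Prop :=
  R.data.one ∈ S ∧ (∀ a ∈ S, ∀ b ∈ S, R.data.op a b ∈ S) ∧
    (∀ a, a ∈ S ↔ R.data.adj a ∈ S)

/-- `φ : R → L` presents `L` as the localization `S⁻¹R` of `R` at the
multiplicative subset `S ⊆ A_{[1]}`: every element of `S` becomes invertible, every
element of `L` is a fraction `φ(a)/φ(s)`, and `φ(a) = φ(b)` iff `s ∘ a = s ∘ b`
for some `s ∈ S`. -/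
def IsLocalizationAt (S : Set (R.data.A (Fin 1))) {L : GenRing} (φ : GenRingHom R L) : Prop :=
  (∀ s ∈ S, ∃ t : L.data.A (Fin 1),
      L.data.op t (φ.app (Fin 1) s) = L.data.one ∧
      L.data.op (φ.app (Fin 1) s) t = L.data.one) ∧
  (∀ (X : Type) [Finite X], ∀ l : L.data.A X, ∃ (a : R.data.A X) (s : R.data.A (Fin 1)),
      s ∈ S ∧ L.data.lact (φ.app (Fin 1) s) l = φ.app X a) ∧
  (∀ (X : Type) [Finite X], ∀ a b : R.data.A X,
      φ.app X a = φ.app X b ↔ ∃ s ∈ S, R.data.lact s a = R.data.lact s b)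

end GenRing


-- ==== AUX DEVELOPMENT ====

section AuxDev

/-- A fiber equivalence for a map constantly equal to `some s₀`. -/
def totalFibEquiv {W S : Type} (F : W → Option S) (s₀ : S) (h : ∀ w, F w = some s₀) :
    pfib F s₀ ≃ W where
  toFun q := q.1
  invFun w := ⟨w, h w⟩
  left_inv q := Subtype.ext rfl
  right_inv w := rfl

@[simp] theorem totalFibEquiv_apply {W S : Type} (F : W → Option S) (s₀ : S)
    (h : ∀ w, F w = some s₀) (q : pfib F s₀) : totalFibEquiv F s₀ h q = q.1 := rfl

theorem subsingleton_pfib {X Y : Type} (f : X → Option Y) (y : Y)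
    (h : ∀ a b, f a = some y → f b = some y → a = b) : Subsingleton (pfib f y) :=
  ⟨fun p q => Subtype.ext (h _ _ p.2 q.2)⟩

theorem resMap_eval {X Y Z : Type} (g : Y → Option Z) (f : X → Option Y) (z : Z)
    (q : pfib (pcomp g f) z) (y : Y) (hy : f q.1 = some y) (h : g y = some z) :
    resMap g f z q = some ⟨y, h⟩ := by
  unfold resMap
  rw [hy, Option.bind_some, dif_pos h]

theorem equivSub_ext {α β : Type*} {p : β → Prop} {e₁ e₂ : α ≃ {b // p b}}
    (h : ∀ a, (e₁ a).1 = (e₂ a).1) : e₁ = e₂ :=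
  Equiv.ext fun a => Subtype.ext (h a)

namespace GenRing

variable (R : GenRing)

theorem map_map {X Y Z : Type} [Finite X] [Finite Y] [Finite Z] (e : X ≃ Y) (e' : Y ≃ Z)
    (a : R.data.A X) : R.data.map e' (R.data.map e a) = R.data.map (e.trans e') a :=
  (R.map_trans e e' a).symm

theorem map_congr {X Y : Type} [Finite X] [Finite Y] {e e' : X ≃ Y} (h : e = e')
    (a : R.data.A X) : R.data.map e a = R.data.map e' a := by rw [h]

/-- `mul` along (the graph of) a bijection, with a unit family, is `map`. -/
theorem mul_graph_units {T T' : Type} [Finite T] [Finite T'] (ee : T ≃ T')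
    (F : T' → Option T) (hF : ∀ t', F t' = some (ee.symm t'))
    (a : R.data.A T) (B : (t : T) → R.data.A (pfib F t))
    (EE : (t : T) → Fin 1 ≃ pfib F t)
    (hEE : ∀ t z, ((EE t z : pfib F t) : T') = ee t)
    (hB : ∀ t, B t = R.data.map (EE t) R.data.one) :
    R.data.mul F a B = R.data.map ee a := by
  have hF' : F = fun t' => some (ee.symm t') := funext hF
  subst hF'
  have hBB : B = fun t => R.data.map (equivFiberEquiv ee.symm t) R.data.one := by
    funext t
    rw [hB t]
    exact R.map_congr (equivSub_ext (fun z => by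
      show ((EE t z : _) : T') = ee.symm.symm t
      rw [Equiv.symm_symm]; exact hEE t z)) _
  rw [hBB]
  exact R.map_eq_mul ee a

/-- `contr` along (the graph of) a bijection, with a unit family, is `map`. -/
theorem contr_graph_units {T T' : Type} [Finite T] [Finite T'] (ee : T ≃ T')
    (G : T → Option T') (hG : ∀ t, G t = some (ee t))
    (a : R.data.A T) (B : (t' : T') → R.data.A (pfib G t'))
    (EE : (t' : T') → Fin 1 ≃ pfib G t')
    (hEE : ∀ t' z, ((EE t' z : pfib G t') : T) = ee.symm t')
    (hB : ∀ t', B t' = R.data.map (EE t') R.data.one) :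
    R.data.contr G a B = R.data.map ee a := by
  have hG' : G = fun t => some (ee t) := funext hG
  subst hG'
  have hBB : B = fun t' => R.data.map (equivFiberEquiv ee t') R.data.one := by
    funext t'
    rw [hB t']
    exact R.map_congr (equivSub_ext (fun z => hEE t' z)) _
  rw [hBB]
  exact R.map_eq_contr ee a


theorem mul_congr {X Y : Type} [Finite X] [Finite Y] (f f' : X → Option Y)
    (h : ∀ x, f x = f' x) (a : R.data.A Y)
    (B : (y : Y) → R.data.A (pfib f y)) (B' : (y : Y) → R.data.A (pfib f' y))
    (hB : ∀ (y : Y) (E : pfib f y ≃ pfib f' y),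
      (∀ q : pfib f y, ((E q : pfib f' y) : X) = (q : X)) →
        R.data.map E (B y) = B' y) :
    R.data.mul f a B = R.data.mul f' a B' := by
  have h' : f = f' := funext h
  subst h'
  refine congrArg (R.data.mul f a) (funext fun y => ?_)
  have := hB y (Equiv.refl _) (fun q => rfl)
  rwa [R.map_refl] at this

theorem contr_congr {X Y : Type} [Finite X] [Finite Y] (f f' : X → Option Y)
    (h : ∀ x, f x = f' x) (a : R.data.A X)
    (B : (y : Y) → R.data.A (pfib f y)) (B' : (y : Y) → R.data.A (pfib f' y))
    (hB : ∀ (y : Y) (E : pfib f y ≃ pfib f' y),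
      (∀ q : pfib f y, ((E q : pfib f' y) : X) = (q : X)) →
        R.data.map E (B y) = B' y) :
    R.data.contr f a B = R.data.contr f' a B' := by
  have h' : f = f' := funext h
  subst h'
  refine congrArg (R.data.contr f a) (funext fun y => ?_)
  have := hB y (Equiv.refl _) (fun q => rfl)
  rwa [R.map_refl] at this

/-- Multiplication along a constant map to `Fin 1` with scalar head is a left action. -/
theorem mul_scalar_const {W : Type} [Finite W] (F : W → Option (Fin 1))
    (hF : ∀ w, F w = some 0) (σ : R.data.A (Fin 1))
    (B : (z : Fin 1) → R.data.A (pfib F z))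
    (E₀ : pfib F 0 ≃ W) (hE₀ : ∀ q, E₀ q = (q : W)) :
    R.data.mul F σ B = R.data.lact σ (R.data.map E₀ (B 0)) := by
  have hF' : F = fun _ => some 0 := funext hF
  subst hF'
  have hrhs : R.data.lact σ (R.data.map E₀ (B 0)) =
      R.data.mul (fun _ : W => some (0 : Fin 1)) σ
        (fun z => R.data.map (constFiberEquiv W z) (R.data.map E₀ (B 0))) := rfl
  rw [hrhs]
  refine congrArg (R.data.mul _ σ) (funext fun z => ?_)
  have hz : (0 : Fin 1) = z := Subsingleton.elim _ _
  subst hz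
  rw [R.map_map]
  refine ((R.map_congr ?_ (B 0)).trans (R.map_refl _ (B 0))).symm
  refine equivSub_ext fun q => ?_
  show ((constFiberEquiv W 0) (E₀ q) : W) = (q : W)
  rw [hE₀ q]
  rfl

theorem atilde_eval {X Y Z : Type} [Finite X] [Finite Y] [Finite Z]
    (g : Z → Option Y) (f : X → Option Y) (a : (y : Y) → R.data.A (pfib g y))
    (x : X) (y : Y) (h : f x = some y) :
    R.data.atilde g f a x = R.data.map (fpFiberSnd g f h) (a y) := by
  unfold GenRingData.atilde
  split
  · next y' hfx =>
      obtain rfl : y' = y := Option.some.inj (hfx.symm.trans h)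
      rfl
  · next hfx => rw [hfx] at h; exact nomatch h

theorem ctilde_eval {X Y Z : Type} [Finite X] [Finite Y] [Finite Z]
    (g : Z → Option Y) (f : X → Option Y) (c : (y : Y) → R.data.A (pfib f y))
    (z : Z) (y : Y) (h : g z = some y) :
    R.data.ctilde g f c z = R.data.map (fpFiberFst g f h) (c y) := by
  unfold GenRingData.ctilde
  split
  · next y' hgz =>
      obtain rfl : y' = y := Option.some.inj (hgz.symm.trans h)
      rfl
  · next hgz => rw [hgz] at h; exact nomatch h

/-- Naturality of multiplication in the source. -/
theorem mul_reindex_source {X X' Y : Type} [Finite X] [Finite X'] [Finite Y]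
    (eX : X ≃ X') (f : X → Option Y) (f' : X' → Option Y)
    (hf' : ∀ x', f' x' = f (eX.symm x'))
    (a : R.data.A Y) (b : (y : Y) → R.data.A (pfib f y))
    (E : (y : Y) → pfib f y ≃ pfib f' y)
    (hE : ∀ y q, ((E y q : pfib f' y) : X') = eX (q : X)) :
    R.data.mul f' a (fun y => R.data.map (E y) (b y)) = R.data.map eX (R.data.mul f a b) := by
  have h1 : f' = fun x' => f (eX.symm x') := funext hf'
  subst h1
  rw [← R.map_eq_mul eX (R.data.mul f a b)]
  rw [← R.assoc f (fun x' : X' => some (eX.symm x')) a b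
      (fun x => R.data.map (equivFiberEquiv eX.symm x) R.data.one)]
  refine congrArg (R.data.mul _ a) (funext fun y => ?_)
  show R.data.map (E y) (b y) = R.data.mul (resMap f (fun x' : X' => some (eX.symm x')) y)
    (b y) _
  refine (R.mul_graph_units (E y) _ ?_ (b y) _
    (fun t => (equivFiberEquiv eX.symm (t : X)).trans
      (resFiberEquiv f (fun x' : X' => some (eX.symm x')) y t))
    ?_ (fun t => R.map_map _ _ _)).symm
  · intro q
    show (Option.bind _ _) = _
    have hq : f (eX.symm (q : X')) = some y := q.2
    show (if h : f (eX.symm (q : X')) = some y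
        then some (⟨eX.symm (q : X'), h⟩ : pfib f y) else none) = _
    rw [dif_pos hq]
    refine congrArg some (Subtype.ext ?_)
    have h2 := congrArg Subtype.val (Equiv.apply_symm_apply (E y) q)
    have h3 := hE y ((E y).symm q)
    show eX.symm (q : X') = (((E y).symm q : pfib f y) : X)
    rw [← h2, h3, Equiv.symm_apply_apply]
  · intro t z
    refine Subtype.ext ?_
    show eX.symm.symm (t : X) = ((E y) t : X')
    rw [Equiv.symm_symm]
    exact (hE y t).symm


theorem map_lact {X X' : Type} [Finite X] [Finite X'] (e : X ≃ X') (σ : R.data.A (Fin 1))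
    (x : R.data.A X) :
    R.data.map e (R.data.lact σ x) = R.data.lact σ (R.data.map e x) := by
  have h := R.mul_reindex_source e (fun _ : X => some (0:Fin 1)) (fun _ : X' => some (0:Fin 1))
      (fun _ => rfl) σ (fun z => R.data.map (constFiberEquiv X z) x)
      (fun z => (constFiberEquiv X z).symm.trans (e.trans (constFiberEquiv X' z)))
      (fun z q => rfl)
  refine (h.symm).trans ?_
  refine (congrArg (R.data.mul (fun _ : X' => some (0:Fin 1)) σ) (funext fun z => ?_) :
    _ = R.data.mul _ σ fun z => R.data.map (constFiberEquiv X' z) (R.data.map e x))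
  rw [R.map_map, R.map_map]
  exact R.map_congr (equivSub_ext fun q => rfl) x

/-- Multiplication along a map to a subsingleton, with head a multiple of the unit. -/
theorem mul_scalar_head {T S : Type} [Finite T] [Finite S] (hS : Subsingleton S)
    (F : T → Option S) (s₀ : S) (hF : ∀ t, F t = some s₀)
    (eU : Fin 1 ≃ S) (σ : R.data.A (Fin 1))
    (B : (s : S) → R.data.A (pfib F s))
    (E₀ : pfib F s₀ ≃ T) (hE₀ : ∀ q, E₀ q = (q : T)) :
    R.data.mul F (R.data.map eU σ) B = R.data.lact σ (R.data.map E₀ (B s₀)) := by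
  have h0 : (fun z : Fin 1 => some (eU z)) 0 = some s₀ := congrArg some (Subsingleton.elim _ _)
  rw [← R.map_eq_contr eU σ]
  rw [R.right_lin F (fun z : Fin 1 => some (eU z)) σ B
      (fun y => R.data.map (equivFiberEquiv eU y) R.data.one)]
  have hF₂ : ∀ p : FP F (fun z : Fin 1 => some (eU z)),
      fpSnd F (fun z : Fin 1 => some (eU z)) p = some 0 :=
    fun p => congrArg some (Subsingleton.elim _ _)
  rw [R.mul_scalar_const (fpSnd F (fun z : Fin 1 => some (eU z))) hF₂ σ _
      (totalFibEquiv _ 0 hF₂) (fun q => rfl)]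
  rw [R.atilde_eval F (fun z : Fin 1 => some (eU z)) B 0 s₀ h0]
  rw [R.map_map]
  rw [R.contr_graph_units
      ({ toFun := fun p => p.1.1
         invFun := fun t => ⟨(t, 0), ⟨s₀, hF t, h0⟩⟩
         left_inv := fun p => Subtype.ext (Prod.ext rfl (Subsingleton.elim _ _))
         right_inv := fun t => rfl } : FP F (fun z : Fin 1 => some (eU z)) ≃ T)
      (fpFst F (fun z : Fin 1 => some (eU z))) (fun p => rfl) _ _
      (fun t => (equivFiberEquiv eU s₀).trans
        (fpFiberFst F (fun z : Fin 1 => some (eU z)) (hF t)))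
      (fun t z => Subtype.ext (Prod.ext rfl (Subsingleton.elim _ _)))
      (fun t => by
        rw [R.ctilde_eval F (fun z : Fin 1 => some (eU z)) _ t s₀ (hF t), R.map_map])]
  rw [R.map_lact, R.map_map]
  refine congrArg (R.data.lact σ) (R.map_congr (Equiv.ext fun q => ?_) (B s₀))
  rw [hE₀ q]
  rfl

/-- Contraction along a constant map to a subsingleton computes a pairing. -/
theorem contr_scalar_point {T S : Type} [Finite T] [Finite S] (hS : Subsingleton S)
    (F : T → Option S) (s₀ : S) (hF : ∀ t, F t = some s₀)
    (eU : Fin 1 ≃ S) (u : R.data.A T)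
    (B : (s : S) → R.data.A (pfib F s))
    (E₀ : pfib F s₀ ≃ T) (hE₀ : ∀ q, E₀ q = (q : T)) :
    R.data.contr F u B = R.data.map eU (R.data.pair u (R.data.map E₀ (B s₀))) := by
  have h0 : (fun z : Fin 1 => some (eU z)) 0 = some s₀ := congrArg some (Subsingleton.elim _ _)
  rw [← R.map_eq_contr eU (R.data.pair u (R.data.map E₀ (B s₀)))]
  have hpair : R.data.pair u (R.data.map E₀ (B s₀)) =
      R.data.contr (fun _ : T => some (0:Fin 1)) u
        (fun z => R.data.map (constFiberEquiv T z) (R.data.map E₀ (B s₀))) := rfl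
  rw [hpair]
  rw [← R.left_adj (fun z : Fin 1 => some (eU z)) (fun _ : T => some (0 : Fin 1)) u
      (fun y => R.data.map (equivFiberEquiv eU y) R.data.one)
      (fun z => R.data.map (constFiberEquiv T z) (R.data.map E₀ (B s₀)))]
  refine R.contr_congr _ _ (fun t => (hF t).trans (congrArg some (Subsingleton.elim _ _))) u B _
    (fun s E hE => ?_)
  have hs : s₀ = s := Subsingleton.elim _ _
  subst hs
  have hsub : Subsingleton (pfib (fun z : Fin 1 => some (eU z)) s₀) :=
    subsingleton_pfib _ _ (fun a b ha hb => eU.injective (Option.some.inj (ha.trans hb.symm)))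
  have hF' : ∀ q : pfib (pcomp (fun z : Fin 1 => some (eU z)) (fun _ : T => some (0:Fin 1))) s₀,
      resMap (fun z : Fin 1 => some (eU z)) (fun _ : T => some (0:Fin 1)) s₀ q
        = some (⟨0, h0⟩ : pfib (fun z : Fin 1 => some (eU z)) s₀) := by
    intro q
    show (if h : (fun z : Fin 1 => some (eU z)) 0 = some s₀
        then some (⟨0, h⟩ : pfib (fun z : Fin 1 => some (eU z)) s₀) else none) = _
    rw [dif_pos h0]
  have hcomp := R.mul_scalar_head hsub
      (resMap (fun z : Fin 1 => some (eU z)) (fun _ : T => some (0:Fin 1)) s₀)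
      (⟨0, h0⟩ : pfib (fun z : Fin 1 => some (eU z)) s₀) hF'
      (equivFiberEquiv eU s₀) R.data.one
      (fun p => R.data.map (resFiberEquiv (fun z : Fin 1 => some (eU z))
          (fun _ : T => some (0:Fin 1)) s₀ p)
        ((fun z => R.data.map (constFiberEquiv T z) (R.data.map E₀ (B s₀))) (p : Fin 1)))
      (totalFibEquiv _ _ hF') (fun q => rfl)
  have hstep : R.data.map E (B s₀)
      = R.data.lact R.data.one (R.data.map (totalFibEquiv _ _ hF')
          (R.data.map (resFiberEquiv (fun z : Fin 1 => some (eU z))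
            (fun _ : T => some (0:Fin 1)) s₀ ⟨0, h0⟩)
          (R.data.map (constFiberEquiv T 0) (R.data.map E₀ (B s₀))))) := by
        rw [R.one_lact, R.map_map, R.map_map, R.map_map]
        exact R.map_congr (Equiv.ext fun q => Subtype.ext ((hE q).trans (hE₀ q).symm)) (B s₀)
  exact hstep.trans hcomp.symm


theorem equiv_subsing {α β : Type*} [Subsingleton β] (e₁ e₂ : α ≃ β) : e₁ = e₂ :=
  Equiv.ext fun _ => Subsingleton.elim _ _

/-- Naturality of contraction in the source. -/
theorem contr_reindex_source {X X' Y : Type} [Finite X] [Finite X'] [Finite Y]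
    (eX : X ≃ X') (f : X → Option Y) (f' : X' → Option Y)
    (hf' : ∀ x', f' x' = f (eX.symm x'))
    (a : R.data.A X) (b : (y : Y) → R.data.A (pfib f y))
    (E : (y : Y) → pfib f y ≃ pfib f' y)
    (hE : ∀ y q, ((E y q : pfib f' y) : X') = eX (q : X)) :
    R.data.contr f' (R.data.map eX a) (fun y => R.data.map (E y) (b y))
      = R.data.contr f a b := by
  have h1 : f' = fun x' => f (eX.symm x') := funext hf'
  subst h1
  have hinner : R.data.contr (fun x' : X' => some (eX.symm x')) (R.data.map eX a)
      (fun x => R.data.map (equivFiberEquiv eX.symm x) R.data.one) = a := by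
    rw [R.contr_graph_units eX.symm (fun x' : X' => some (eX.symm x')) (fun _ => rfl)
      (R.data.map eX a) _ (fun x => equivFiberEquiv eX.symm x) (fun x z => rfl)
      (fun x => rfl)]
    rw [R.map_map]
    exact (R.map_congr (Equiv.self_trans_symm eX) a).trans (R.map_refl _ a)
  have h := R.left_adj f (fun x' : X' => some (eX.symm x')) (R.data.map eX a) b
      (fun x => R.data.map (equivFiberEquiv eX.symm x) R.data.one)
  rw [hinner] at h
  refine Eq.trans ?_ h
  refine congrArg (R.data.contr _ (R.data.map eX a)) (funext fun y => ?_)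
  refine (R.mul_graph_units (E y) _ ?_ (b y) _
    (fun t => (equivFiberEquiv eX.symm (t : X)).trans
      (resFiberEquiv f (fun x' : X' => some (eX.symm x')) y t))
    ?_ (fun t => R.map_map _ _ _)).symm
  · intro q
    have hq : f (eX.symm (q : X')) = some y := q.2
    show (if h : f (eX.symm (q : X')) = some y
        then some (⟨eX.symm (q : X'), h⟩ : pfib f y) else none) = _
    rw [dif_pos hq]
    refine congrArg some (Subtype.ext ?_)
    have h2 := congrArg Subtype.val (Equiv.apply_symm_apply (E y) q)
    have h3 := hE y ((E y).symm q)
    show eX.symm (q : X') = (((E y).symm q : pfib f y) : X)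
    rw [← h2, h3, Equiv.symm_apply_apply]
  · intro t z
    refine Subtype.ext ?_
    show eX.symm.symm (t : X) = ((E y) t : X')
    rw [Equiv.symm_symm]
    exact (hE y t).symm

theorem pair_reindex {X X' : Type} [Finite X] [Finite X'] (e : X ≃ X')
    (u w : R.data.A X) :
    R.data.pair (R.data.map e u) (R.data.map e w) = R.data.pair u w := by
  have h := R.contr_reindex_source e (fun _ : X => some (0:Fin 1)) (fun _ : X' => some (0:Fin 1))
      (fun _ => rfl) u (fun z => R.data.map (constFiberEquiv X z) w)
      (fun z => (constFiberEquiv X z).symm.trans (e.trans (constFiberEquiv X' z)))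
      (fun z q => rfl)
  refine Eq.trans ?_ h
  refine (congrArg (R.data.contr (fun _ : X' => some (0:Fin 1)) (R.data.map e u))
    (funext fun z => ?_) : _ = _)
  rw [R.map_map, R.map_map]
  exact (R.map_congr (equivSub_ext fun q => rfl) w).symm

theorem op_eq_lact (σ y : R.data.A (Fin 1)) : R.data.op σ y = R.data.lact σ y := by
  have hF : ∀ z : Fin 1, (fun z' : Fin 1 => some z') z = some 0 :=
    fun z => congrArg some (Subsingleton.elim _ _)
  have h := R.mul_scalar_const (fun z : Fin 1 => some z) hF σ
      (fun z => R.data.map (idFiberEquiv z) y) (totalFibEquiv _ 0 hF) (fun q => rfl)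
  refine h.trans ?_
  refine congrArg (R.data.lact σ) ?_
  rw [R.map_map]
  exact (R.map_congr (equiv_subsing _ _) y).trans (R.map_refl _ y)

theorem op_one (a : R.data.A (Fin 1)) : R.data.op a R.data.one = a := R.mul_one_id _ a

theorem one_op (a : R.data.A (Fin 1)) : R.data.op R.data.one a = a := by
  rw [R.op_eq_lact, R.one_lact]

theorem lact_lact {M : Type} [Finite M] (σ τ : R.data.A (Fin 1)) (m : R.data.A M) :
    R.data.lact (R.data.op σ τ) m = R.data.lact σ (R.data.lact τ m) := by
  have h := R.assoc (fun z : Fin 1 => some z) (fun _ : M => some (0:Fin 1)) σ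
      (fun z => R.data.map (idFiberEquiv z) τ) (fun z => R.data.map (constFiberEquiv M z) m)
  refine h.symm.trans ?_
  refine R.mul_congr _ _ (fun x => rfl) σ _ _ (fun z E hE => ?_)
  have h00 : some (0 : Fin 1) = some z := congrArg some (Subsingleton.elim _ _)
  have hsub : Subsingleton (pfib (fun z' : Fin 1 => some z') z) :=
    subsingleton_pfib _ _ (fun a b ha hb => (Option.some.inj ha).trans (Option.some.inj hb).symm)
  have hF' : ∀ q : pfib (pcomp (fun z' : Fin 1 => some z') (fun _ : M => some (0:Fin 1))) z,
      resMap (fun z' : Fin 1 => some z') (fun _ : M => some (0:Fin 1)) z q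
        = some (⟨z, rfl⟩ : pfib (fun z' : Fin 1 => some z') z) := by
    intro q
    refine (resMap_eval _ _ z q 0 rfl h00).trans
      (congrArg some (Subtype.ext (Subsingleton.elim _ _)))
  have hcomp := R.mul_scalar_head hsub
      (resMap (fun z' : Fin 1 => some z') (fun _ : M => some (0:Fin 1)) z)
      (⟨z, rfl⟩ : pfib (fun z' : Fin 1 => some z') z) hF' (idFiberEquiv z) τ
      (fun p => R.data.map (resFiberEquiv (fun z' : Fin 1 => some z')
          (fun _ : M => some (0:Fin 1)) z p)
        (R.data.map (constFiberEquiv M (p : Fin 1)) m))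
      (totalFibEquiv _ _ hF') (fun q => rfl)
  refine Eq.trans (congrArg (R.data.map E) hcomp) ?_
  rw [R.map_lact]
  have hml : R.data.map (constFiberEquiv M z) (R.data.lact τ m)
      = R.data.lact τ (R.data.map (constFiberEquiv M z) m) := R.map_lact _ τ m
  rw [hml]
  refine congrArg (R.data.lact τ) ?_
  beta_reduce
  simp only [R.map_map]
  exact congrArg (fun ee => R.data.map ee m) (equivSub_ext fun q => hE _)

theorem op_assoc (a b c : R.data.A (Fin 1)) :
    R.data.op (R.data.op a b) c = R.data.op a (R.data.op b c) := by
  rw [R.op_eq_lact (R.data.op a b) c, R.lact_lact, R.op_eq_lact a (R.data.op b c),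
    R.op_eq_lact b c]

theorem pairid (u v : R.data.A (Fin 1)) :
    R.data.contr (fun z : Fin 1 => some z) u (fun z => R.data.map (idFiberEquiv z) v)
      = R.data.pair u v := by
  refine R.contr_congr _ _ (fun x => congrArg some (Subsingleton.elim _ _)) u _ _
    (fun z E hE => ?_)
  rw [R.map_map]
  exact R.map_congr (equivSub_ext fun q => Subsingleton.elim _ _) v

theorem pair_one (v : R.data.A (Fin 1)) : R.data.pair v R.data.one = v := by
  have h := R.contr_graph_units (Equiv.refl (Fin 1)) (fun _ : Fin 1 => some (0:Fin 1))
      (fun t => congrArg some (Subsingleton.elim _ _)) v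
      (fun z => R.data.map (constFiberEquiv (Fin 1) z) R.data.one)
      (fun z => constFiberEquiv (Fin 1) z) (fun t z => Subsingleton.elim _ _)
      (fun t => rfl)
  exact h.trans (R.map_refl _ v)

theorem adj_op (a b : R.data.A (Fin 1)) :
    R.data.adj (R.data.op a b) = R.data.pair (R.data.adj b) a := by
  have h := R.left_adj (fun z : Fin 1 => some z) (fun z : Fin 1 => some z) R.data.one
      (fun z => R.data.map (idFiberEquiv z) a) (fun z => R.data.map (idFiberEquiv z) b)
  rw [R.pairid R.data.one b] at h
  rw [R.pairid _ a] at h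
  refine Eq.trans ?_ h
  show R.data.pair R.data.one (R.data.op a b) = _
  refine (R.contr_congr _ _ (fun x => congrArg some (Subsingleton.elim _ _)) R.data.one _ _
    (fun z E hE => ?_)).symm
  have h00 : some (0 : Fin 1) = some z := congrArg some (Subsingleton.elim _ _)
  have hsub : Subsingleton (pfib (fun z' : Fin 1 => some z') z) :=
    subsingleton_pfib _ _ (fun a b ha hb => (Option.some.inj ha).trans (Option.some.inj hb).symm)
  have hF' : ∀ q : pfib (pcomp (fun z' : Fin 1 => some z') (fun z' : Fin 1 => some z')) z,
      resMap (fun z' : Fin 1 => some z') (fun z' : Fin 1 => some z') z q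
        = some (⟨z, rfl⟩ : pfib (fun z' : Fin 1 => some z') z) := by
    intro q
    refine (resMap_eval _ _ z q (q : Fin 1) rfl q.2).trans
      (congrArg some (Subtype.ext (Subsingleton.elim _ _)))
  have hcomp := R.mul_scalar_head hsub
      (resMap (fun z' : Fin 1 => some z') (fun z' : Fin 1 => some z') z)
      (⟨z, rfl⟩ : pfib (fun z' : Fin 1 => some z') z) hF' (idFiberEquiv z) a
      (fun p => R.data.map (resFiberEquiv (fun z' : Fin 1 => some z')
          (fun z' : Fin 1 => some z') z p)
        (R.data.map (idFiberEquiv (p : Fin 1)) b))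
      (totalFibEquiv _ _ hF') (fun q => rfl)
  refine Eq.trans (congrArg (R.data.map E) hcomp) ?_
  refine (R.map_lact _ _ _).trans ?_
  have hml : R.data.map (constFiberEquiv (Fin 1) z) (R.data.op a b)
      = R.data.lact a (R.data.map (constFiberEquiv (Fin 1) z) b) := by
    rw [R.op_eq_lact, R.map_lact]
  rw [hml]
  refine congrArg (R.data.lact a) ?_
  rw [R.map_map, R.map_map]; refine (R.map_map _ _ _).trans ?_
  exact R.map_congr (equivSub_ext fun q => Subsingleton.elim _ _) b

theorem pair_swap (a c : R.data.A (Fin 1)) :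
    R.data.pair c a = R.data.adj (R.data.pair a c) := by
  have h := R.right_adj (fun z : Fin 1 => some z) (fun z : Fin 1 => some z) R.data.one
      (fun z => R.data.map (idFiberEquiv z) a) (fun z => R.data.map (idFiberEquiv z) c)
  have h1 : R.data.mul (fun z : Fin 1 => some z) R.data.one
      (fun z => R.data.map (idFiberEquiv z) c) = c := R.one_op c
  rw [h1] at h
  refine Eq.trans ?_ (h.trans ?_)
  · refine (R.contr_congr _ _ (fun x => congrArg some (Subsingleton.elim _ _)) c _ _
      (fun z E hE => ?_)).symm
    refine (R.map_map _ _ _).trans ?_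
    exact R.map_congr (equivSub_ext fun q => Subsingleton.elim _ _) a
  · -- contr idF one (econtr idF idF afam cfam) = adj (pair a c)
    refine Eq.trans ?_ (R.pairid R.data.one (R.data.pair a c))
    refine congrArg (R.data.contr _ R.data.one) (funext fun z => ?_)
    have hsub : Subsingleton (pfib (fun z' : Fin 1 => some z') z) :=
      subsingleton_pfib _ _ (fun a b ha hb =>
        (Option.some.inj ha).trans (Option.some.inj hb).symm)
    have hF' : ∀ q : pfib (pcomp (fun z' : Fin 1 => some z') (fun z' : Fin 1 => some z')) z,
        resMap (fun z' : Fin 1 => some z') (fun z' : Fin 1 => some z') z q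
          = some (⟨z, rfl⟩ : pfib (fun z' : Fin 1 => some z') z) := by
      intro q
      refine (resMap_eval _ _ z q (q : Fin 1) rfl q.2).trans
        (congrArg some (Subtype.ext (Subsingleton.elim _ _)))
    have hcomp := R.contr_scalar_point hsub
        (resMap (fun z' : Fin 1 => some z') (fun z' : Fin 1 => some z') z)
        (⟨z, rfl⟩ : pfib (fun z' : Fin 1 => some z') z) hF' (idFiberEquiv z)
        (R.data.map (idFiberEquiv z) a)
        (fun p => R.data.map (resFiberEquiv (fun z' : Fin 1 => some z')
            (fun z' : Fin 1 => some z') z p)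
          (R.data.map (idFiberEquiv (p : Fin 1)) c))
        (totalFibEquiv _ _ hF') (fun q => rfl)
    refine Eq.trans hcomp ?_
    refine congrArg (R.data.map (idFiberEquiv z)) ?_
    rw [R.map_map, R.map_map]
    have hc : R.data.map ((idFiberEquiv z).trans
        ((resFiberEquiv (fun z' : Fin 1 => some z') (fun z' : Fin 1 => some z') z
          ⟨z, rfl⟩).trans (totalFibEquiv _ _ hF'))) c
        = R.data.map (idFiberEquiv z) c :=
      R.map_congr (equiv_subsing _ _) c
    rw [hc]
    exact R.pair_reindex (idFiberEquiv z) a c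

theorem op_comm (hsa : ∀ x : R.data.A (Fin 1), R.data.adj x = x)
    (a b : R.data.A (Fin 1)) : R.data.op a b = R.data.op b a := by
  have h1 : ∀ x y : R.data.A (Fin 1), R.data.op x y = R.data.pair y x := fun x y => by
    rw [← hsa (R.data.op x y), R.adj_op, hsa]
  rw [h1 a b, h1 b a, R.pair_swap, hsa]

theorem lact_cancel {X : Type} [Finite X] (t u : R.data.A (Fin 1))
    (h : R.data.op t u = R.data.one)
    (x y : R.data.A X) (hxy : R.data.lact u x = R.data.lact u y) : x = y := by
  have key : ∀ w : R.data.A X, w = R.data.lact t (R.data.lact u w) := fun w => by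
    rw [← R.lact_lact, h, R.one_lact]
  rw [key x, key y, hxy]


theorem opPow_succ (a : R.data.A (Fin 1)) (n : ℕ) :
    R.data.opPow a (n+1) = R.data.op a (R.data.opPow a n) := rfl

theorem opPow_add (a : R.data.A (Fin 1)) (n m : ℕ) :
    R.data.opPow a (n + m) = R.data.op (R.data.opPow a n) (R.data.opPow a m) := by
  induction n with
  | zero => simp only [Nat.zero_add]; exact (R.one_op _).symm
  | succ n ih =>
      rw [Nat.succ_add, R.opPow_succ, R.opPow_succ, ih, R.op_assoc]

theorem opPow_mul_base (hsa : ∀ x : R.data.A (Fin 1), R.data.adj x = x)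
    (a b : R.data.A (Fin 1)) (n : ℕ) :
    R.data.opPow (R.data.op a b) n = R.data.op (R.data.opPow a n) (R.data.opPow b n) := by
  induction n with
  | zero => exact (R.one_op _).symm
  | succ n ih =>
      rw [R.opPow_succ, R.opPow_succ, R.opPow_succ, ih]
      rw [R.op_assoc a b _, ← R.op_assoc b (R.data.opPow a n) _,
        R.op_comm hsa b (R.data.opPow a n), R.op_assoc (R.data.opPow a n) b _,
        ← R.op_assoc a (R.data.opPow a n) _]

theorem pow_juggle (hsa : ∀ x : R.data.A (Fin 1), R.data.adj x = x)
    (u v : R.data.A (Fin 1)) (n : ℕ) :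
    R.data.op (R.data.opPow v (n+1)) (R.data.opPow u n)
      = R.data.op (R.data.opPow (R.data.op u v) n) v := by
  rw [R.opPow_succ, R.op_assoc, R.opPow_mul_base hsa,
    R.op_comm hsa (R.data.opPow v n) (R.data.opPow u n),
    R.op_comm hsa v (R.data.op (R.data.opPow u n) (R.data.opPow v n))]

end GenRing

/-- The canonical equivalence of `M` with the fiber of `fpSnd` over `z : Z`
for the fibered product `M ×_{[1]} Z`. -/
def keyBIG (M Z : Type) (z : Z) :
    M ≃ pfib (fpSnd (fun _ : M => some (0:Fin 1)) (fun _ : Z => some (0:Fin 1))) z where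
  toFun m₀ := ⟨⟨(m₀, z), ⟨0, rfl, rfl⟩⟩, rfl⟩
  invFun q := q.1.1.1
  left_inv _ := rfl
  right_inv q := Subtype.ext (Subtype.ext (Prod.ext rfl (Option.some.inj q.2).symm))

/-- The canonical equivalence of `Z` with the fiber of `fpFst` over `m' : M`
for the fibered product `M ×_{[1]} Z`. -/
def keyDD (M Z : Type) (m' : M) :
    Z ≃ pfib (fpFst (fun _ : M => some (0:Fin 1)) (fun _ : Z => some (0:Fin 1))) m' where
  toFun z₀ := ⟨⟨(m', z₀), ⟨0, rfl, rfl⟩⟩, rfl⟩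
  invFun q := q.1.1.2
  left_inv _ := rfl
  right_inv q := Subtype.ext (Subtype.ext (Prod.ext (Option.some.inj q.2).symm rfl))

/-- The canonical equivalence `Z ≃ [1] ×_{[1]} Z`. -/
def keyZF (Z : Type) :
    Z ≃ FP (fun _ : Fin 1 => some (0:Fin 1)) (fun _ : Z => some (0:Fin 1)) where
  toFun z₀ := ⟨(0, z₀), ⟨0, rfl, rfl⟩⟩
  invFun p := p.1.2
  left_inv _ := rfl
  right_inv p := Subtype.ext (Prod.ext (Subsingleton.elim _ _) rfl)

namespace GenRing

variable (R : GenRing)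

/-- The key identity: the left action of the scalar `((b ∘ c), d)` on `m`
expressed as an explicit contraction over the fibered product. -/
theorem key_identity {M Z : Type} [Finite M] [Finite Z]
    (b : R.data.A Z) (c : Z → R.data.A (Fin 1)) (d : R.data.A Z) (m : R.data.A M) :
    R.data.lact (R.data.pair (R.data.ract b c) d) m
      = R.data.contr (fpFst (fun _ : M => some (0:Fin 1)) (fun _ : Z => some (0:Fin 1)))
          (R.data.mul (fpSnd (fun _ : M => some (0:Fin 1)) (fun _ : Z => some (0:Fin 1))) b
            (fun z => R.data.map (keyBIG M Z z) (R.data.lact (c z) m)))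
          (fun m' => R.data.map (keyDD M Z m') d) := by
  have h1 := R.right_lin (fun _ : M => some (0:Fin 1)) (fun _ : Z => some (0:Fin 1))
      (R.data.ract b c) (fun y => R.data.map (constFiberEquiv M y) m)
      (fun y => R.data.map (constFiberEquiv Z y) d)
  refine Eq.trans h1 ?_
  have h2 := R.assoc (fun z : Z => some z)
      (fpSnd (fun _ : M => some (0:Fin 1)) (fun _ : Z => some (0:Fin 1))) b
      (fun z => R.data.map (idFiberEquiv z) (c z))
      (R.data.atilde (fun _ : M => some (0:Fin 1)) (fun _ : Z => some (0:Fin 1))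
        (fun y => R.data.map (constFiberEquiv M y) m))
  have hhead : R.data.mul (fpSnd (fun _ : M => some (0:Fin 1)) (fun _ : Z => some (0:Fin 1)))
      (R.data.ract b c)
      (R.data.atilde (fun _ : M => some (0:Fin 1)) (fun _ : Z => some (0:Fin 1))
        (fun y => R.data.map (constFiberEquiv M y) m))
      = R.data.mul (fpSnd (fun _ : M => some (0:Fin 1)) (fun _ : Z => some (0:Fin 1))) b
          (fun z => R.data.map (keyBIG M Z z) (R.data.lact (c z) m)) := by
    refine Eq.trans h2.symm ?_
    refine R.mul_congr _ _ (fun p => rfl) b _ _ (fun z E hE => ?_)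
    have hsub : Subsingleton (pfib (fun z' : Z => some z') z) :=
      subsingleton_pfib _ _ (fun a b ha hb =>
        (Option.some.inj ha).trans (Option.some.inj hb).symm)
    have hF' : ∀ q : pfib (pcomp (fun z' : Z => some z')
        (fpSnd (fun _ : M => some (0:Fin 1)) (fun _ : Z => some (0:Fin 1)))) z,
        resMap (fun z' : Z => some z')
          (fpSnd (fun _ : M => some (0:Fin 1)) (fun _ : Z => some (0:Fin 1))) z q
          = some (⟨z, rfl⟩ : pfib (fun z' : Z => some z') z) := by
      intro q
      refine (resMap_eval _ _ z q q.1.1.2 rfl q.2).trans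
        (congrArg some (Subtype.ext (Option.some.inj q.2)))
    have hcomp := R.mul_scalar_head hsub
        (resMap (fun z' : Z => some z')
          (fpSnd (fun _ : M => some (0:Fin 1)) (fun _ : Z => some (0:Fin 1))) z)
        (⟨z, rfl⟩ : pfib (fun z' : Z => some z') z) hF' (idFiberEquiv z) (c z)
        (fun p => R.data.map (resFiberEquiv (fun z' : Z => some z')
            (fpSnd (fun _ : M => some (0:Fin 1)) (fun _ : Z => some (0:Fin 1))) z p)
          (R.data.map (fpFiberSnd (fun _ : M => some (0:Fin 1)) (fun _ : Z => some (0:Fin 1))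
              (show (fun _ : Z => some (0:Fin 1)) (p : Z) = some 0 from rfl))
            (R.data.map (constFiberEquiv M 0) m)))
        (totalFibEquiv _ _ hF') (fun q => rfl)
    refine Eq.trans (congrArg (R.data.map E) hcomp) ?_
    rw [R.map_lact]
    have hml : R.data.map (keyBIG M Z z) (R.data.lact (c z) m)
        = R.data.lact (c z) (R.data.map (keyBIG M Z z) m) := R.map_lact _ (c z) m
    rw [hml]
    refine congrArg (R.data.lact (c z)) ?_
    beta_reduce
    simp only [R.map_map]
    exact congrArg (fun ee => R.data.map ee m) (equivSub_ext fun q => hE _)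
  have hfam : (R.data.ctilde (fun _ : M => some (0:Fin 1)) (fun _ : Z => some (0:Fin 1))
      (fun y => R.data.map (constFiberEquiv Z y) d))
      = fun m' => R.data.map (keyDD M Z m') d := by
    funext m'
    rw [R.ctilde_eval (fun _ : M => some (0:Fin 1)) (fun _ : Z => some (0:Fin 1)) _ m' 0 rfl]
    beta_reduce
    rw [R.map_map]
    exact congrArg (fun ee => R.data.map ee d) (equivSub_ext fun z₀ => rfl)
  rw [hhead, hfam]


theorem key_identity2 {Z : Type} [Finite Z]
    (b : R.data.A Z) (c : Z → R.data.A (Fin 1)) (d : R.data.A Z) (y : R.data.A (Fin 1)) :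
    R.data.op (R.data.pair (R.data.ract b c) d) y
      = R.data.pair (R.data.ract b (fun z => R.data.op (c z) y)) d := by
  rw [R.op_eq_lact, R.key_identity]
  simp only [← R.op_eq_lact]
  have hV : R.data.mul (fpSnd (fun _ : Fin 1 => some (0:Fin 1)) (fun _ : Z => some (0:Fin 1))) b
      (fun z => R.data.map (keyBIG (Fin 1) Z z) (R.data.op (c z) y))
      = R.data.map (keyZF Z) (R.data.ract b (fun z => R.data.op (c z) y)) := by
    have h := R.mul_reindex_source (keyZF Z) (fun z : Z => some z)
        (fpSnd (fun _ : Fin 1 => some (0:Fin 1)) (fun _ : Z => some (0:Fin 1)))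
        (fun p => rfl) b (fun z => R.data.map (idFiberEquiv z) (R.data.op (c z) y))
        (fun z => (idFiberEquiv z).symm.trans (keyBIG (Fin 1) Z z))
        (fun z q => Subtype.ext (Prod.ext rfl (Option.some.inj q.2).symm))
    refine Eq.trans ?_ h
    refine congrArg (R.data.mul _ b) (funext fun z => ?_)
    rw [R.map_map]
    exact congrArg (fun ee => R.data.map ee (R.data.op (c z) y))
      (equivSub_ext fun m₀ => Subtype.ext (Prod.ext (Subsingleton.elim _ _) rfl))
  rw [hV]
  have hd : R.data.contr (fpFst (fun _ : Fin 1 => some (0:Fin 1)) (fun _ : Z => some (0:Fin 1)))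
      (R.data.map (keyZF Z) (R.data.ract b (fun z => R.data.op (c z) y)))
      (fun m' => R.data.map (keyDD (Fin 1) Z m') d)
      = R.data.pair (R.data.map (keyZF Z) (R.data.ract b (fun z => R.data.op (c z) y)))
          (R.data.map (keyZF Z) d) := by
    refine R.contr_congr _ _ (fun p => congrArg some (Subsingleton.elim _ _)) _ _ _
      (fun m' E hE => ?_)
    rw [R.map_map]; refine (R.map_map _ _ _).trans ?_
    exact congrArg (fun ee => R.data.map ee d)
      (equivSub_ext fun z₀ =>
        (hE _).trans (Subtype.ext (Prod.ext (Subsingleton.elim _ _) rfl)))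
  rw [hd]
  exact R.pair_reindex (keyZF Z) _ d

theorem hideal_zero_mem {I : Set (R.data.A (Fin 1))} (hI : R.IsHIdeal I) :
    R.data.zero (Fin 1) ∈ I := by
  have h := hI Empty (R.data.zero Empty) (R.data.zero Empty) (fun x => x.elim) (fun x => x.elim)
  have h2 : R.data.pair (R.data.ract (R.data.zero Empty) (fun x : Empty => x.elim))
      (R.data.zero Empty) = R.data.zero (Fin 1) := by
    have h3 : R.data.ract (R.data.zero Empty) (fun x : Empty => x.elim) = R.data.zero Empty :=
      R.isEmpty_eq_zero Empty _
    show R.data.contr _ _ _ = _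
    rw [h3]
    exact R.contr_zero_left _ _
  rwa [h2] at h

theorem hideal_op_mem {I : Set (R.data.A (Fin 1))} (hI : R.IsHIdeal I)
    {u : R.data.A (Fin 1)} (hu : u ∈ I) (w : R.data.A (Fin 1)) : R.data.op w u ∈ I := by
  have h := hI (Fin 1) w R.data.one (fun _ => u) (fun _ => hu)
  rw [R.pair_one] at h
  exact h

theorem hideal_op_mem' (hsa : ∀ x : R.data.A (Fin 1), R.data.adj x = x)
    {I : Set (R.data.A (Fin 1))} (hI : R.IsHIdeal I)
    {u : R.data.A (Fin 1)} (hu : u ∈ I) (w : R.data.A (Fin 1)) : R.data.op u w ∈ I := by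
  rw [R.op_comm hsa]
  exact R.hideal_op_mem hI hu w

theorem equalizer_hideal {X : Type} [Finite X] (m₁ m₂ : R.data.A X) :
    R.IsHIdeal {σ | R.data.lact σ m₁ = R.data.lact σ m₂} := by
  intro Z _ b d c hc
  show R.data.lact _ m₁ = R.data.lact _ m₂
  rw [R.key_identity, R.key_identity]
  exact congrArg₂ (R.data.contr _)
    (congrArg (R.data.mul _ b) (funext fun z => congrArg (R.data.map _) (hc z))) rfl

end GenRing

/-- The `h`-ideal generated by a subset `E ⊆ A_{[1]}`. -/
inductive genIdeal (R : GenRing) (E : Set (R.data.A (Fin 1))) : R.data.A (Fin 1) → Prop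
  | base {x} : x ∈ E → genIdeal R E x
  | step (X : Type) [Finite X] (b d : R.data.A X) (c : X → R.data.A (Fin 1)) :
      (∀ x, genIdeal R E (c x)) → genIdeal R E (R.data.pair (R.data.ract b c) d)

namespace GenRing

variable (R : GenRing)

theorem genIdeal_isHIdeal (E : Set (R.data.A (Fin 1))) :
    R.IsHIdeal {x | genIdeal R E x} := fun X _ b d c hc => genIdeal.step X b d c hc

theorem genIdeal_subset {E I : Set (R.data.A (Fin 1))} (hI : R.IsHIdeal I) (hEI : E ⊆ I)
    {x} (hx : genIdeal R E x) : x ∈ I := by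
  induction hx with
  | base h => exact hEI h
  | step X b d c hc ih => exact hI X b d c ih

theorem genIdeal_mono {E E' : Set (R.data.A (Fin 1))} (h : E ⊆ E')
    {x} (hx : genIdeal R E x) : genIdeal R E' x := by
  induction hx with
  | base hb => exact .base (h hb)
  | step X b d c hc ih => exact .step X b d c ih

theorem genIdeal_finite {E : Set (R.data.A (Fin 1))} {x} (hx : genIdeal R E x) :
    ∃ E₀ ⊆ E, E₀.Finite ∧ genIdeal R E₀ x := by
  induction hx with
  | base hb => exact ⟨{_}, Set.singleton_subset_iff.2 hb, Set.finite_singleton _,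
      .base rfl⟩
  | step X b d c hc ih =>
      choose E₀ hsub hfin hmem using ih
      refine ⟨⋃ x, E₀ x, Set.iUnion_subset hsub, Set.finite_iUnion hfin, ?_⟩
      exact .step X b d c (fun x => R.genIdeal_mono (Set.subset_iUnion E₀ x) (hmem x))

theorem gen_op_mem (hsa : ∀ x : R.data.A (Fin 1), R.data.adj x = x)
    {M : Set (R.data.A (Fin 1))} (hM : R.IsHIdeal M) (a b : R.data.A (Fin 1))
    (hab : R.data.op a b ∈ M)
    {x y : R.data.A (Fin 1)} (hx : genIdeal R (M ∪ {a}) x) (hy : genIdeal R (M ∪ {b}) y) :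
    R.data.op x y ∈ M := by
  induction hx with
  | base hb =>
      rcases hb with hb | hb
      · rw [R.op_comm hsa]; exact R.hideal_op_mem hM hb y
      · rcases hb with rfl
        induction hy with
        | base hb' =>
            rcases hb' with hb' | hb'
            · exact R.hideal_op_mem hM hb' _
            · rcases hb' with rfl; exact hab
        | step X b' d' c' hc' ih' =>
            rw [R.op_comm hsa, R.key_identity2]
            exact hM X b' d' _ (fun z => by rw [R.op_comm hsa]; exact ih' z)
  | step X b' d' c' hc' ih =>
      rw [R.key_identity2]
      exact hM X b' d' _ ih

theorem pow_notin_prime (p : SpecG R) {s : R.data.A (Fin 1)} (hs : s ∉ p.I) (n : ℕ) :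
    R.data.opPow s n ∉ p.I := by
  induction n with
  | zero => exact p.prime.2.1
  | succ n ih =>
      intro h
      rcases p.prime.2.2 _ _ h with h' | h'
      exacts [hs h', ih h']

theorem exists_prime_avoiding (hsa : ∀ x : R.data.A (Fin 1), R.data.adj x = x)
    (E : Set (R.data.A (Fin 1))) (s : R.data.A (Fin 1))
    (hE : ∀ n, ¬ genIdeal R E (R.data.opPow s n)) :
    ∃ p : SpecG R, E ⊆ p.I ∧ s ∉ p.I := by
  classical
  set 𝒮 : Set (Set (R.data.A (Fin 1))) :=
    {I | R.IsHIdeal I ∧ E ⊆ I ∧ ∀ n, R.data.opPow s n ∉ I} with h𝒮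
  have hub : ∀ c ⊆ 𝒮, IsChain (· ⊆ ·) c → c.Nonempty →
      ∃ ub ∈ 𝒮, ∀ t ∈ c, t ⊆ ub := by
    intro c hc hchain hne
    refine ⟨⋃₀ c, ⟨?_, ?_, ?_⟩, fun t ht => Set.subset_sUnion_of_mem ht⟩
    · intro X _ b d cc hcc
      letI : Fintype X := Fintype.ofFinite X
      have hdir : Directed (· ⊆ ·) (Subtype.val : c → Set (R.data.A (Fin 1))) :=
        (hchain.directedOn).directed_val
      haveI : Nonempty c := hne.to_subtype
      have hsubU : ((Finset.univ.image cc : Finset (R.data.A (Fin 1))) : Set _)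
          ⊆ ⋃ i : c, (i : Set (R.data.A (Fin 1))) := by
        intro a ha
        simp only [Finset.coe_image, Set.mem_image] at ha
        obtain ⟨x, _, rfl⟩ := ha
        obtain ⟨I, hIc, hxI⟩ := hcc x
        exact Set.mem_iUnion.2 ⟨⟨I, hIc⟩, hxI⟩
      obtain ⟨⟨J, hJc⟩, hJ⟩ := hdir.exists_mem_subset_of_finset_subset_biUnion hsubU
      have hmem : ∀ x, cc x ∈ J :=
        fun x => hJ (Finset.mem_coe.2 (Finset.mem_image_of_mem cc (Finset.mem_univ x)))
      exact Set.mem_sUnion.2 ⟨J, hJc, (hc hJc).1 X b d cc hmem⟩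
    · obtain ⟨I, hIc⟩ := hne
      exact fun e he => Set.mem_sUnion.2 ⟨I, hIc, (hc hIc).2.1 he⟩
    · intro n hn
      obtain ⟨I, hIc, hnI⟩ := Set.mem_sUnion.1 hn
      exact (hc hIc).2.2 n hnI
  have hseed : {x | genIdeal R E x} ∈ 𝒮 :=
    ⟨R.genIdeal_isHIdeal E, fun e he => genIdeal.base he, hE⟩
  obtain ⟨M, hsub, hmax⟩ := zorn_subset_nonempty 𝒮 hub _ hseed
  have hMh : R.IsHIdeal M := hmax.1.1
  have hprime : R.IsPrimeH M := by
    refine ⟨hMh, fun h1 => hmax.1.2.2 0 h1, ?_⟩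
    intro a b hab
    by_contra hcon
    push_neg at hcon
    obtain ⟨ha, hb⟩ := hcon
    have hga : ∃ n, genIdeal R (M ∪ {a}) (R.data.opPow s n) := by
      by_contra hg; push_neg at hg
      have hin : {x | genIdeal R (M ∪ {a}) x} ∈ 𝒮 :=
        ⟨R.genIdeal_isHIdeal _, fun e he => .base (Or.inl (hmax.1.2.1 he)), hg⟩
      have hMsub : M ⊆ {x | genIdeal R (M ∪ {a}) x} := fun m hm => .base (Or.inl hm)
      exact ha (hmax.2 hin hMsub (genIdeal.base (Or.inr rfl)))
    have hgb : ∃ m, genIdeal R (M ∪ {b}) (R.data.opPow s m) := by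
      by_contra hg; push_neg at hg
      have hin : {x | genIdeal R (M ∪ {b}) x} ∈ 𝒮 :=
        ⟨R.genIdeal_isHIdeal _, fun e he => .base (Or.inl (hmax.1.2.1 he)), hg⟩
      have hMsub : M ⊆ {x | genIdeal R (M ∪ {b}) x} := fun m hm => .base (Or.inl hm)
      exact hb (hmax.2 hin hMsub (genIdeal.base (Or.inr rfl)))
    obtain ⟨n, hn⟩ := hga
    obtain ⟨m, hm⟩ := hgb
    have hnm := R.gen_op_mem hsa hMh a b hab hn hm
    rw [← R.opPow_add] at hnm
    exact hmax.1.2.2 _ hnm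
  refine ⟨⟨M, hprime⟩, hmax.1.2.1, fun hs => hmax.1.2.2 1 ?_⟩
  have h1 : R.data.opPow s 1 = s := R.op_one s
  rwa [h1]


theorem isOpen_basicOpen (u : R.data.A (Fin 1)) : IsOpen (R.basicOpen u) :=
  TopologicalSpace.GenerateOpen.basic _ ⟨u, rfl⟩

theorem op_notin_iff (hsa : ∀ x : R.data.A (Fin 1), R.data.adj x = x) (p : SpecG R)
    (u v : R.data.A (Fin 1)) :
    R.data.op u v ∉ p.I ↔ u ∉ p.I ∧ v ∉ p.I := by
  constructor
  · intro h
    exact ⟨fun hu => h (R.hideal_op_mem' hsa p.prime.1 hu v),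
      fun hv => h (R.hideal_op_mem p.prime.1 hv u)⟩
  · rintro ⟨hu, hv⟩ h
    rcases p.prime.2.2 u v h with h' | h'
    exacts [hu h', hv h']

theorem exists_basic_subset (hsa : ∀ x : R.data.A (Fin 1), R.data.adj x = x)
    {U : Set (SpecG R)} (hU : IsOpen U) {p : SpecG R} (hp : p ∈ U) :
    ∃ u, u ∉ p.I ∧ R.basicOpen u ⊆ U := by
  have hU' : TopologicalSpace.GenerateOpen {V | ∃ a, V = R.basicOpen a} U := hU
  clear hU
  induction hU' with
  | basic V hV =>
      obtain ⟨a, rfl⟩ := hV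
      exact ⟨a, hp, subset_rfl⟩
  | univ => exact ⟨R.data.one, p.prime.2.1, Set.subset_univ _⟩
  | inter U₁ U₂ h₁ h₂ ih₁ ih₂ =>
      obtain ⟨u, hu, hU₁⟩ := ih₁ hp.1
      obtain ⟨v, hv, hU₂⟩ := ih₂ hp.2
      refine ⟨R.data.op u v, (R.op_notin_iff hsa p u v).2 ⟨hu, hv⟩, ?_⟩
      intro q hq
      have h := (R.op_notin_iff hsa q u v).1 hq
      exact ⟨hU₁ h.1, hU₂ h.2⟩
  | sUnion S hS ih =>
      obtain ⟨V, hVS, hpV⟩ := hp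
      obtain ⟨u, hu, hsubV⟩ := ih V hVS hpV
      exact ⟨u, hu, hsubV.trans (Set.subset_sUnion_of_mem hVS)⟩

theorem nullstellensatz (hsa : ∀ x : R.data.A (Fin 1), R.data.adj x = x)
    (E : Set (R.data.A (Fin 1))) (s : R.data.A (Fin 1))
    (hcov : ∀ p : SpecG R, s ∉ p.I → ∃ e ∈ E, e ∉ p.I) :
    ∃ n, genIdeal R E (R.data.opPow s n) := by
  by_contra h
  push_neg at h
  obtain ⟨p, hEp, hsp⟩ := R.exists_prime_avoiding hsa E s h
  obtain ⟨e, heE, hep⟩ := hcov p hsp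
  exact hep (hEp heE)

theorem pow_mem_S (hsa : ∀ x : R.data.A (Fin 1), R.data.adj x = x)
    (s : R.data.A (Fin 1)) (n : ℕ) :
    R.data.opPow s n ∈ {x | ∃ n m : ℕ, x = R.data.op (R.data.opPow s n)
      (R.data.adj (R.data.opPow s m))} := by
  refine ⟨n, 0, ?_⟩
  rw [hsa]
  exact (R.op_one _).symm

theorem S_elem_eq_pow (hsa : ∀ x : R.data.A (Fin 1), R.data.adj x = x)
    {s x : R.data.A (Fin 1)}
    (hx : x ∈ {x | ∃ n m : ℕ, x = R.data.op (R.data.opPow s n)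
      (R.data.adj (R.data.opPow s m))}) :
    ∃ k, x = R.data.opPow s k := by
  obtain ⟨n, m, rfl⟩ := hx
  refine ⟨n + m, ?_⟩
  rw [hsa, ← R.opPow_add]

end GenRing

end AuxDev

/-- A section `g` of the structure sheaf over the basic open set `D_s`, with values
`g q ∈ (A_q)_X` in the localizations at the primes `q ∈ D_s`, is *locally a fraction*:
around every point of `D_s` there is an open set `U` on which `g` is constantly equal
to a fraction `a/t` with `a ∈ A_X` and `t ∈ A_{[1]}` avoiding all primes of `U`. -/
def LocallyFraction (R : GenRing) (s : R.data.A (Fin 1)) (Lp : SpecG R → GenRing)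
    (φp : ∀ p : SpecG R, GenRingHom R (Lp p)) (X : Type) [Finite X]
    (g : (q : {p : SpecG R // p ∈ R.basicOpen s}) → (Lp q.1).data.A X) : Prop :=
  ∀ q : {p : SpecG R // p ∈ R.basicOpen s}, ∃ U : Set (SpecG R),
    IsOpen U ∧ q.1 ∈ U ∧ U ⊆ R.basicOpen s ∧
      ∃ (a : R.data.A X) (t : R.data.A (Fin 1)), (∀ r ∈ U, t ∉ r.I) ∧
        ∀ r : {p : SpecG R // p ∈ R.basicOpen s}, r.1 ∈ U →
          (Lp r.1).data.lact ((φp r.1).app (Fin 1) t) (g r) = (φp r.1).app X a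

/-- **The structure sheaf on a basic open set (Theorem 5.3.5).**  Let `R` be a
self-adjoint generalized ring and `s ∈ A_{[1]}`.  Let `φ : R → L` present `L` as the
localization `R_s` of `R` at `{sⁿ ∘ (sᵐ)ᵗ : n, m ≥ 0}`, for each prime `p` let
`φp p : R → Lp p` present `Lp p` as the localization `R_p` at `A_{[1]} ∖ p`, and let
`ρ p : L → Lp p` be the canonical comparison homomorphisms (`ρ p ∘ φ = φp p`).  Then
for every finite `X` the canonical homomorphism `Ψ`, sending `l ∈ (R_s)_X` to the
constant section `q ↦ ρ q (l)` of the structure sheaf over `D_s`, is an isomorphism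
of `(R_s)_X` onto the set `O_R(D_s)_X` of sections that are locally fractions; in
particular (`s = 1`) `R ≅ O_R(spec R)`. -/
theorem structure_sheaf_sections_iso (R : GenRing)
    (hsa : ∀ x : R.data.A (Fin 1), R.data.adj x = x) (s : R.data.A (Fin 1))
    (L : GenRing) (φ : GenRingHom R L)
    (hloc : R.IsLocalizationAt
      {x | ∃ n m : ℕ, x = R.data.op (R.data.opPow s n) (R.data.adj (R.data.opPow s m))} φ)
    (Lp : SpecG R → GenRing) (φp : ∀ p : SpecG R, GenRingHom R (Lp p))
    (hLp : ∀ p : SpecG R, R.IsLocalizationAt {a | a ∉ p.I} (φp p))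
    (ρ : ∀ p : SpecG R, GenRingHom L (Lp p))
    (hρ : ∀ (p : SpecG R) (X : Type) [Finite X] (a : R.data.A X),
        (ρ p).app X (φ.app X a) = (φp p).app X a) :
    ∀ (X : Type) [Finite X],
      (∀ l : L.data.A X,
          LocallyFraction R s Lp φp X (fun q => (ρ q.1).app X l)) ∧
        ∀ g : (q : {p : SpecG R // p ∈ R.basicOpen s}) → (Lp q.1).data.A X,
          LocallyFraction R s Lp φp X g →
            ∃! l : L.data.A X,
              ∀ q : {p : SpecG R // p ∈ R.basicOpen s}, (ρ q.1).app X l = g q := by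
  intro X _
  constructor
  · -- the image of any element of the localization is locally a fraction
    intro l q
    refine ⟨R.basicOpen s, R.isOpen_basicOpen s, q.2, subset_rfl, ?_⟩
    obtain ⟨a, σ, hσS, hσl⟩ := hloc.2.1 X l
    obtain ⟨k, hk⟩ := R.S_elem_eq_pow hsa hσS
    refine ⟨a, σ, fun r hr => by rw [hk]; exact R.pow_notin_prime r hr k, fun r hr => ?_⟩
    have h1 := congrArg ((ρ r.1).app X) hσl
    rw [(ρ r.1).app_lact, hρ r.1 (Fin 1) σ, hρ r.1 X a] at h1
    exact h1
  · -- every locally-fraction section comes from a unique element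
    intro g hg
    have step1 : ∀ q : {p : SpecG R // p ∈ R.basicOpen s},
        ∃ (v : R.data.A (Fin 1)) (a : R.data.A X),
          v ∉ q.1.I ∧ (∀ r : SpecG R, v ∉ r.I → s ∉ r.I) ∧
          (∀ r : {p : SpecG R // p ∈ R.basicOpen s}, v ∉ r.1.I →
            (Lp r.1).data.lact ((φp r.1).app (Fin 1) v) (g r) = (φp r.1).app X a) := by
      intro q
      obtain ⟨U, hUopen, hqU, hUsub, a, t, htU, hfr⟩ := hg q
      obtain ⟨w, hwq, hwsub⟩ := R.exists_basic_subset hsa hUopen hqU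
      refine ⟨R.data.op w t, R.data.lact w a,
        (R.op_notin_iff hsa q.1 w t).2 ⟨hwq, htU q.1 hqU⟩, ?_, ?_⟩
      · intro r hr
        exact hUsub (hwsub ((R.op_notin_iff hsa r w t).1 hr).1)
      · intro r hr
        have hrw := (R.op_notin_iff hsa r.1 w t).1 hr
        have hrU : r.1 ∈ U := hwsub hrw.1
        have h2 := hfr r hrU
        rw [(φp r.1).app_op, (Lp r.1).lact_lact, h2, ← (φp r.1).app_lact]
    choose vfun afun hv1 hv3 hv2 using step1
    have hcov₁ : ∀ p : SpecG R, s ∉ p.I → ∃ e ∈ Set.range vfun, e ∉ p.I := fun p hp =>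
      ⟨vfun ⟨p, hp⟩, ⟨⟨p, hp⟩, rfl⟩, hv1 ⟨p, hp⟩⟩
    obtain ⟨N₁, hN₁⟩ := R.nullstellensatz hsa _ s hcov₁
    obtain ⟨E₀, hE₀sub, hE₀fin, hgen₀⟩ := R.genIdeal_finite hN₁
    have hsubcov : ∀ p : SpecG R, s ∉ p.I → ∃ e ∈ E₀, e ∉ p.I := by
      intro p hp
      by_contra hcon
      push_neg at hcon
      exact R.pow_notin_prime p hp N₁ (R.genIdeal_subset p.prime.1 hcon hgen₀)
    haveI : Fintype ↥E₀ := hE₀fin.fintype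
    have hptE : ∀ i : ↥E₀, ∃ q, vfun q = i.1 := fun i => hE₀sub i.2
    choose qι hqι using hptE
    have hpairE : ∀ i j : ↥E₀, ∃ n,
        R.data.lact (R.data.opPow (R.data.op (vfun (qι i)) (vfun (qι j))) n)
            (R.data.lact (vfun (qι j)) (afun (qι i)))
          = R.data.lact (R.data.opPow (R.data.op (vfun (qι i)) (vfun (qι j))) n)
              (R.data.lact (vfun (qι i)) (afun (qι j))) := by
      intro i j
      have hcov' : ∀ p : SpecG R, R.data.op (vfun (qι i)) (vfun (qι j)) ∉ p.I →
          ∃ e ∈ {σ | R.data.lact σ (R.data.lact (vfun (qι j)) (afun (qι i)))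
            = R.data.lact σ (R.data.lact (vfun (qι i)) (afun (qι j)))}, e ∉ p.I := by
        intro p hp
        have hij := (R.op_notin_iff hsa p _ _).1 hp
        have hps : s ∉ p.I := hv3 (qι i) p hij.1
        have h₁ := hv2 (qι i) ⟨p, hps⟩ hij.1
        have h₂ := hv2 (qι j) ⟨p, hps⟩ hij.2
        have heq : (φp p).app X (R.data.lact (vfun (qι j)) (afun (qι i)))
            = (φp p).app X (R.data.lact (vfun (qι i)) (afun (qι j))) := by
          rw [(φp p).app_lact, (φp p).app_lact, ← h₁, ← h₂]
          rw [← (Lp p).lact_lact, ← (Lp p).lact_lact, ← (φp p).app_op, ← (φp p).app_op]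
          rw [R.op_comm hsa (vfun (qι j)) (vfun (qι i))]
        obtain ⟨σ, hσp, hσ⟩ := ((hLp p).2.2 X _ _).1 heq
        exact ⟨σ, hσ, hσp⟩
      obtain ⟨n, hn⟩ := R.nullstellensatz hsa _ _ hcov'
      exact ⟨n, R.genIdeal_subset (R.equalizer_hideal _ _) subset_rfl hn⟩
    choose nf hnf using hpairE
    set N : ℕ := Finset.univ.sup (fun pq : ↥E₀ × ↥E₀ => nf pq.1 pq.2) with hN
    have hpairN : ∀ i j : ↥E₀,
        R.data.lact (R.data.opPow (R.data.op (vfun (qι i)) (vfun (qι j))) N)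
            (R.data.lact (vfun (qι j)) (afun (qι i)))
          = R.data.lact (R.data.opPow (R.data.op (vfun (qι i)) (vfun (qι j))) N)
              (R.data.lact (vfun (qι i)) (afun (qι j))) := by
      intro i j
      have hle : nf i j ≤ N := Finset.le_sup (f := fun pq : ↥E₀ × ↥E₀ => nf pq.1 pq.2)
        (Finset.mem_univ (i, j))
      have hpad := R.hideal_op_mem (R.equalizer_hideal
          (R.data.lact (vfun (qι j)) (afun (qι i)))
          (R.data.lact (vfun (qι i)) (afun (qι j)))) (hnf i j)
          (R.data.opPow (R.data.op (vfun (qι i)) (vfun (qι j))) (N - nf i j))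
      rw [← R.opPow_add] at hpad
      rw [show N - nf i j + nf i j = N from Nat.sub_add_cancel hle] at hpad
      exact hpad
    have hB' : ∀ (i : ↥E₀) (r : {p : SpecG R // p ∈ R.basicOpen s}),
        vfun (qι i) ∉ r.1.I →
        (Lp r.1).data.lact ((φp r.1).app (Fin 1) (R.data.opPow (vfun (qι i)) (N+1))) (g r)
          = (φp r.1).app X (R.data.lact (R.data.opPow (vfun (qι i)) N) (afun (qι i))) := by
      intro i r hr
      have h2 := hv2 (qι i) r hr
      have hsplit : R.data.opPow (vfun (qι i)) (N+1)
          = R.data.op (R.data.opPow (vfun (qι i)) N) (vfun (qι i)) := by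
        rw [R.opPow_succ, R.op_comm hsa]
      rw [hsplit, (φp r.1).app_op, (Lp r.1).lact_lact, h2, ← (φp r.1).app_lact]
    have hC : ∀ i j : ↥E₀,
        R.data.lact (R.data.opPow (vfun (qι j)) (N+1))
            (R.data.lact (R.data.opPow (vfun (qι i)) N) (afun (qι i)))
          = R.data.lact (R.data.opPow (vfun (qι i)) (N+1))
              (R.data.lact (R.data.opPow (vfun (qι j)) N) (afun (qι j))) := by
      intro i j
      rw [← R.lact_lact, ← R.lact_lact]
      rw [R.pow_juggle hsa (vfun (qι i)) (vfun (qι j)) N]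
      rw [R.pow_juggle hsa (vfun (qι j)) (vfun (qι i)) N]
      rw [show R.data.op (vfun (qι j)) (vfun (qι i))
          = R.data.op (vfun (qι i)) (vfun (qι j)) from R.op_comm hsa _ _]
      rw [R.lact_lact, R.lact_lact]
      exact hpairN i j
    have hD : ∀ (i : ↥E₀) (r : {p : SpecG R // p ∈ R.basicOpen s}),
        (Lp r.1).data.lact ((φp r.1).app (Fin 1) (R.data.opPow (vfun (qι i)) (N+1))) (g r)
          = (φp r.1).app X (R.data.lact (R.data.opPow (vfun (qι i)) N) (afun (qι i))) := by
      intro i r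
      obtain ⟨e₀, he₀, he₀p⟩ := hsubcov r.1 r.2
      have hj : vfun (qι ⟨e₀, he₀⟩) ∉ r.1.I := by rw [hqι ⟨e₀, he₀⟩]; exact he₀p
      have hjpow : R.data.opPow (vfun (qι ⟨e₀, he₀⟩)) (N+1) ∉ r.1.I :=
        R.pow_notin_prime r.1 hj (N+1)
      obtain ⟨t, ht1, ht2⟩ := (hLp r.1).1 _ hjpow
      refine (Lp r.1).lact_cancel t _ ht1 _ _ ?_
      rw [← (Lp r.1).lact_lact, ← (φp r.1).app_op]
      rw [R.op_comm hsa (R.data.opPow (vfun (qι ⟨e₀, he₀⟩)) (N+1))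
        (R.data.opPow (vfun (qι i)) (N+1))]
      rw [(φp r.1).app_op, (Lp r.1).lact_lact, hB' ⟨e₀, he₀⟩ r hj, ← (φp r.1).app_lact]
      rw [← hC i ⟨e₀, he₀⟩]
      rw [(φp r.1).app_lact]
    have hcov₂ : ∀ p : SpecG R, s ∉ p.I →
        ∃ e ∈ Set.range (fun i : ↥E₀ => R.data.opPow (vfun (qι i)) (N+1)), e ∉ p.I := by
      intro p hp
      obtain ⟨e₀, he₀, he₀p⟩ := hsubcov p hp
      refine ⟨_, ⟨⟨e₀, he₀⟩, rfl⟩, R.pow_notin_prime p ?_ (N+1)⟩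
      rw [hqι ⟨e₀, he₀⟩]; exact he₀p
    obtain ⟨N₂, hN₂⟩ := R.nullstellensatz hsa _ s hcov₂
    have glue : ∀ x, genIdeal R (Set.range fun i : ↥E₀ =>
          R.data.opPow (vfun (qι i)) (N+1)) x →
        ∃ A : R.data.A X, ∀ r : {p : SpecG R // p ∈ R.basicOpen s},
          (Lp r.1).data.lact ((φp r.1).app (Fin 1) x) (g r) = (φp r.1).app X A := by
      intro x hx
      induction hx with
      | base hb =>
          obtain ⟨i, rfl⟩ := hb
          exact ⟨_, hD i⟩
      | step Z b d c hc ih =>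
          choose A hA using ih
          refine ⟨R.data.contr
              (fpFst (fun _ : X => some (0:Fin 1)) (fun _ : Z => some (0:Fin 1)))
              (R.data.mul (fpSnd (fun _ : X => some (0:Fin 1)) (fun _ : Z => some (0:Fin 1))) b
                (fun z => R.data.map (keyBIG X Z z) (A z)))
              (fun m' => R.data.map (keyDD X Z m') d), ?_⟩
          intro r
          have hL : (φp r.1).app (Fin 1) (R.data.pair (R.data.ract b c) d)
              = (Lp r.1).data.pair ((Lp r.1).data.ract ((φp r.1).app Z b)
                  (fun z => (φp r.1).app (Fin 1) (c z))) ((φp r.1).app Z d) := by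
            rw [(φp r.1).app_pair, (φp r.1).app_ract]
          rw [hL, (Lp r.1).key_identity, (φp r.1).app_contr, (φp r.1).app_mul]
          refine congrArg₂ ((Lp r.1).data.contr _) ?_ ?_
          · refine congrArg ((Lp r.1).data.mul _ _) (funext fun z => ?_)
            rw [(φp r.1).app_map]
            exact congrArg _ (hA z r)
          · funext m'
            rw [(φp r.1).app_map]
    obtain ⟨A, hA⟩ := glue _ hN₂
    obtain ⟨t, ht1, ht2⟩ := hloc.1 _ (R.pow_mem_S hsa s N₂)
    have hlval : ∀ q : {p : SpecG R // p ∈ R.basicOpen s},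
        (ρ q.1).app X (L.data.lact t (φ.app X A)) = g q := by
      intro q
      have hval : (Lp q.1).data.lact ((φp q.1).app (Fin 1) (R.data.opPow s N₂))
          ((ρ q.1).app X (L.data.lact t (φ.app X A))) = (φp q.1).app X A := by
        rw [(ρ q.1).app_lact]
        rw [← hρ q.1 (Fin 1) (R.data.opPow s N₂)]
        rw [← (Lp q.1).lact_lact, ← (ρ q.1).app_op, ht2, (ρ q.1).app_one, (Lp q.1).one_lact]
        exact hρ q.1 X A
      have hpow : R.data.opPow s N₂ ∉ q.1.I := R.pow_notin_prime q.1 q.2 N₂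
      obtain ⟨t', ht'1, ht'2⟩ := (hLp q.1).1 _ hpow
      exact (Lp q.1).lact_cancel t' _ ht'1 _ _ (hval.trans (hA q).symm)
    refine ⟨L.data.lact t (φ.app X A), hlval, ?_⟩
    intro l' hl'
    obtain ⟨a₁, σ₁, hσ₁S, h₁⟩ := hloc.2.1 X l'
    obtain ⟨a₂, σ₂, hσ₂S, h₂⟩ := hloc.2.1 X (L.data.lact t (φ.app X A))
    obtain ⟨k₁, hk₁⟩ := R.S_elem_eq_pow hsa hσ₁S
    obtain ⟨k₂, hk₂⟩ := R.S_elem_eq_pow hsa hσ₂S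
    have hglq : ∀ q : {p : SpecG R // p ∈ R.basicOpen s},
        (ρ q.1).app X l' = (ρ q.1).app X (L.data.lact t (φ.app X A)) := by
      intro q
      rw [hl' q, hlval q]
    have hmeq : ∀ p : SpecG R, s ∉ p.I →
        (φp p).app X (R.data.lact σ₂ a₁) = (φp p).app X (R.data.lact σ₁ a₂) := by
      intro p hp
      have e₁ := congrArg ((ρ p).app X) h₁
      rw [(ρ p).app_lact, hρ p (Fin 1) σ₁, hρ p X a₁] at e₁
      have e₂ := congrArg ((ρ p).app X) h₂
      rw [(ρ p).app_lact, hρ p (Fin 1) σ₂, hρ p X a₂] at e₂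
      rw [(φp p).app_lact, (φp p).app_lact, ← e₁, ← e₂]
      rw [← (Lp p).lact_lact, ← (Lp p).lact_lact, ← (φp p).app_op, ← (φp p).app_op]
      rw [R.op_comm hsa σ₂ σ₁]
      rw [hglq ⟨p, hp⟩]
    have hcov₃ : ∀ p : SpecG R, s ∉ p.I →
        ∃ e ∈ {σ | R.data.lact σ (R.data.lact σ₂ a₁) = R.data.lact σ (R.data.lact σ₁ a₂)},
          e ∉ p.I := by
      intro p hp
      obtain ⟨σ, hσp, hσ⟩ := ((hLp p).2.2 X _ _).1 (hmeq p hp)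
      exact ⟨σ, hσ, hσp⟩
    obtain ⟨n₃, hn₃⟩ := R.nullstellensatz hsa _ s hcov₃
    have heq3 : R.data.lact (R.data.opPow s n₃) (R.data.lact σ₂ a₁)
        = R.data.lact (R.data.opPow s n₃) (R.data.lact σ₁ a₂) :=
      R.genIdeal_subset (R.equalizer_hideal _ _) subset_rfl hn₃
    have hLeq := congrArg (φ.app X) heq3
    rw [φ.app_lact, φ.app_lact, φ.app_lact, φ.app_lact] at hLeq
    rw [← h₁, ← h₂] at hLeq
    rw [← L.lact_lact, ← L.lact_lact, ← L.lact_lact, ← L.lact_lact] at hLeq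
    rw [← φ.app_op, ← φ.app_op, ← φ.app_op, ← φ.app_op] at hLeq
    rw [R.op_assoc (R.data.opPow s n₃) σ₂ σ₁, R.op_assoc (R.data.opPow s n₃) σ₁ σ₂] at hLeq
    rw [R.op_comm hsa σ₂ σ₁] at hLeq
    rw [hk₁, hk₂, ← R.opPow_add, ← R.opPow_add] at hLeq
    obtain ⟨u, hu1, hu2⟩ := hloc.1 _ (R.pow_mem_S hsa s (n₃ + (k₁ + k₂)))
    exact L.lact_cancel u _ hu1 _ _ hLeq

end
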